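/- arXiv:1203.0037 — 3 statements merged into one kernel-verified Lean document; each statement's English description precedes it below -/
import Mathlib

section
/- Let A be a bialgebra, C a coalgebra, and suppose A_{W₀}^{ρ₀} ⋈_R^σ C is a cross product bialgebra (with tensor product coalgebra structure). Let θ, γ : C → A⊗C, written θ(c) = c_{<-1>}⊗c_{<0>}, γ(c) = c_{\{-1\}}⊗c_{\{0\}}, satisfy v_{<-1>} v_{<0>_{\{-1\}}} ⊗ v_{<0>_{\{0\}}} = 1_A⊗v for all v, together with ε_A(c_{<-1>})ε_C(c_{<0>}) = ε_C(c), and the comodule compatibility c_{<-1>} ⊗ c_{<0>₁} ⊗ c_{<0>₂} = c₁_{<-1>} ⊗ c₁_{<0>} ⊗ c₂. Then ε_C(c₁_{<0>}) c₁_{<-1>} c₂_{\{-1\}} ⊗ c₂_{\{0\}} = 1_A ⊗ c and ε_A(c_{\{-1\}}) c_{\{0\}} = c for all c ∈ C. -/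
open TensorProduct LinearMap Coalgebra

noncomputable section

namespace Paper

universe u

variable (k : Type u) [Field k]

section AlgebraSide

variable (A : Type u) [Ring A] [Algebra k A]
variable (V : Type u) [AddCommGroup V] [Module k V]

/-- `a ⊗ (b ⊗ v) ↦ ab ⊗ v`. -/
def muls2 : A ⊗[k] (A ⊗[k] V) →ₗ[k] A ⊗[k] V :=
  rTensor V (mul' k A) ∘ₗ (TensorProduct.assoc k A A V).symm.toLinearMap

/-- `a ⊗ (b ⊗ (c ⊗ v)) ↦ abc ⊗ v`. -/
def muls3 : A ⊗[k] (A ⊗[k] (A ⊗[k] V)) →ₗ[k] A ⊗[k] V :=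
  muls2 k A V ∘ₗ lTensor A (muls2 k A V)

variable {A V}

/-- The multiplication of the Brzezinski crossed product `A ⊗_{R,σ} V`. -/
def brzMul (R : V ⊗[k] A →ₗ[k] A ⊗[k] V) (σ : V ⊗[k] V →ₗ[k] A ⊗[k] V) :
    (A ⊗[k] V) ⊗[k] (A ⊗[k] V) →ₗ[k] A ⊗[k] V :=
  muls2 k A V ∘ₗ
    lTensor A (muls2 k A V ∘ₗ lTensor A σ ∘ₗ (TensorProduct.assoc k A V V).toLinearMap
      ∘ₗ rTensor V R ∘ₗ (TensorProduct.assoc k V A V).symm.toLinearMap) ∘ₗ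
    (TensorProduct.assoc k A V (A ⊗[k] V)).toLinearMap

/-- The axioms (1.1)--(1.5) of a Brzezinski crossed product. -/
structure IsBrzezinski (e : V) (R : V ⊗[k] A →ₗ[k] A ⊗[k] V)
    (σ : V ⊗[k] V →ₗ[k] A ⊗[k] V) : Prop where
  unit_R_left : ∀ a : A, R (e ⊗ₜ a) = a ⊗ₜ e
  unit_R_right : ∀ v : V, R (v ⊗ₜ (1 : A)) = (1 : A) ⊗ₜ v
  unit_σ_left : ∀ v : V, σ (e ⊗ₜ v) = (1 : A) ⊗ₜ v
  unit_σ_right : ∀ v : V, σ (v ⊗ₜ e) = (1 : A) ⊗ₜ v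
  brz3 : R ∘ₗ lTensor V (mul' k A)
      = rTensor V (mul' k A) ∘ₗ (TensorProduct.assoc k A A V).symm.toLinearMap
        ∘ₗ lTensor A R ∘ₗ (TensorProduct.assoc k A V A).toLinearMap
        ∘ₗ rTensor A R ∘ₗ (TensorProduct.assoc k V A A).symm.toLinearMap
  brz4 : muls2 k A V ∘ₗ lTensor A σ ∘ₗ (TensorProduct.assoc k A V V).toLinearMap
        ∘ₗ rTensor V R ∘ₗ (TensorProduct.assoc k V A V).symm.toLinearMap ∘ₗ lTensor V σ
      = muls2 k A V ∘ₗ lTensor A σ ∘ₗ (TensorProduct.assoc k A V V).toLinearMap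
        ∘ₗ rTensor V σ ∘ₗ (TensorProduct.assoc k V V V).symm.toLinearMap
  brz5 : muls2 k A V ∘ₗ lTensor A σ ∘ₗ (TensorProduct.assoc k A V V).toLinearMap
        ∘ₗ rTensor V R ∘ₗ (TensorProduct.assoc k V A V).symm.toLinearMap ∘ₗ lTensor V R
      = muls2 k A V ∘ₗ lTensor A R ∘ₗ (TensorProduct.assoc k A V A).toLinearMap
        ∘ₗ rTensor A σ ∘ₗ (TensorProduct.assoc k V V A).symm.toLinearMap

/-- The twisted tensor product multiplication on `A ⊗ B`, for a "multiplication"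
`m` on the vector space `B`. -/
def ttMul {B : Type u} [AddCommGroup B] [Module k B]
    (R : B ⊗[k] A →ₗ[k] A ⊗[k] B) (m : B ⊗[k] B →ₗ[k] B) :
    (A ⊗[k] B) ⊗[k] (A ⊗[k] B) →ₗ[k] A ⊗[k] B :=
  muls2 k A B ∘ₗ
    lTensor A (lTensor A m ∘ₗ (TensorProduct.assoc k A B B).toLinearMap
      ∘ₗ rTensor B R ∘ₗ (TensorProduct.assoc k B A B).symm.toLinearMap) ∘ₗ
    (TensorProduct.assoc k A B (A ⊗[k] B)).toLinearMap

/-- The axioms of a twisting map `R : B ⊗ A → A ⊗ B`, where the algebra structure on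
the vector space `B` is given by the multiplication `m` with unit `e`. -/
structure IsTwisting {B : Type u} [AddCommGroup B] [Module k B]
    (R : B ⊗[k] A →ₗ[k] A ⊗[k] B) (m : B ⊗[k] B →ₗ[k] B) (e : B) : Prop where
  unit_left : ∀ a : A, R (e ⊗ₜ a) = a ⊗ₜ e
  unit_right : ∀ b : B, R (b ⊗ₜ (1 : A)) = (1 : A) ⊗ₜ b
  mul_A : R ∘ₗ lTensor B (mul' k A)
      = rTensor B (mul' k A) ∘ₗ (TensorProduct.assoc k A A B).symm.toLinearMap
        ∘ₗ lTensor A R ∘ₗ (TensorProduct.assoc k A B A).toLinearMap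
        ∘ₗ rTensor A R ∘ₗ (TensorProduct.assoc k B A A).symm.toLinearMap
  mul_B : R ∘ₗ rTensor A m
      = lTensor A m ∘ₗ (TensorProduct.assoc k A B B).toLinearMap
        ∘ₗ rTensor B R ∘ₗ (TensorProduct.assoc k B A B).symm.toLinearMap
        ∘ₗ lTensor B R ∘ₗ (TensorProduct.assoc k B B A).toLinearMap

/-- The deformed map `R'` of the invariance under twisting theorem (formula (Rprim)). -/
def Rtw (R : V ⊗[k] A →ₗ[k] A ⊗[k] V) (θ γ : V →ₗ[k] A ⊗[k] V) :
    V ⊗[k] A →ₗ[k] A ⊗[k] V :=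
  muls3 k A V ∘ₗ lTensor A (lTensor A γ) ∘ₗ lTensor A R
    ∘ₗ (TensorProduct.assoc k A V A).toLinearMap ∘ₗ rTensor A θ

/-- The deformed map `σ'` of the invariance under twisting theorem (formula (sigmaprim)). -/
def σtw (R : V ⊗[k] A →ₗ[k] A ⊗[k] V) (σ : V ⊗[k] V →ₗ[k] A ⊗[k] V)
    (θ γ : V →ₗ[k] A ⊗[k] V) : V ⊗[k] V →ₗ[k] A ⊗[k] V :=
  muls2 k A V ∘ₗ lTensor A γ ∘ₗ muls3 k A V ∘ₗ lTensor A (lTensor A σ)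
    ∘ₗ lTensor A ((TensorProduct.assoc k A V V).toLinearMap ∘ₗ rTensor V R
        ∘ₗ (TensorProduct.assoc k V A V).symm.toLinearMap)
    ∘ₗ (TensorProduct.assoc k A V (A ⊗[k] V)).toLinearMap ∘ₗ TensorProduct.map θ θ

/-- Condition (cros4), relative to a map `σ'`. -/
def Cros4 (R : V ⊗[k] A →ₗ[k] A ⊗[k] V) (σ : V ⊗[k] V →ₗ[k] A ⊗[k] V)
    (γ : V →ₗ[k] A ⊗[k] V) (σ' : V ⊗[k] V →ₗ[k] A ⊗[k] V) : Prop :=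
  muls2 k A V ∘ₗ TensorProduct.map (mul' k A) σ'
      ∘ₗ (TensorProduct.assoc k (A ⊗[k] A) V V).toLinearMap
      ∘ₗ rTensor V (TensorProduct.assoc k A A V).symm.toLinearMap
      ∘ₗ rTensor V (lTensor A γ) ∘ₗ rTensor V R
      ∘ₗ (TensorProduct.assoc k V A V).symm.toLinearMap ∘ₗ lTensor V γ
    = muls2 k A V ∘ₗ lTensor A γ ∘ₗ σ

/-- Conditions (cros1)--(cros3) on the pair `(θ, γ)`. -/
def Cros123 (e : V) (θ γ : V →ₗ[k] A ⊗[k] V) : Prop :=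
  θ e = (1 : A) ⊗ₜ e ∧ γ e = (1 : A) ⊗ₜ e ∧
  muls2 k A V ∘ₗ lTensor A γ ∘ₗ θ = TensorProduct.mk k A V 1 ∧
  muls2 k A V ∘ₗ lTensor A θ ∘ₗ γ = TensorProduct.mk k A V 1

/-- The map `φ(a ⊗ v) = a v_{<-1>} ⊗ v_{<0>}`. -/
def φtw (θ : V →ₗ[k] A ⊗[k] V) : A ⊗[k] V →ₗ[k] A ⊗[k] V :=
  muls2 k A V ∘ₗ lTensor A θ

end AlgebraSide

section CoalgebraSide

variable (C : Type u) [AddCommGroup C] [Module k C] [Coalgebra k C]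
variable (X : Type u) [AddCommGroup X] [Module k X]

variable {C X}

/-- The comultiplication of the crossed coproduct `X_{W,ρ} ⊗ C`. -/
def coDelta (W : X ⊗[k] C →ₗ[k] C ⊗[k] X) (ρ : X ⊗[k] C →ₗ[k] X ⊗[k] X) :
    X ⊗[k] C →ₗ[k] (X ⊗[k] C) ⊗[k] (X ⊗[k] C) :=
  (TensorProduct.assoc k X C (X ⊗[k] C)).symm.toLinearMap ∘ₗ
  lTensor X (TensorProduct.assoc k C X C).toLinearMap ∘ₗ
  lTensor X (rTensor C W) ∘ₗ
  lTensor X (TensorProduct.assoc k X C C).symm.toLinearMap ∘ₗ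
  (TensorProduct.assoc k X X (C ⊗[k] C)).toLinearMap ∘ₗ
  TensorProduct.map ρ comul ∘ₗ
  (TensorProduct.assoc k X C C).symm.toLinearMap ∘ₗ
  lTensor X comul

/-- The counit `ε_X ⊗ ε_C` of the crossed coproduct. -/
def coEps (εX : X →ₗ[k] k) : X ⊗[k] C →ₗ[k] k :=
  (TensorProduct.lid k k).toLinearMap ∘ₗ TensorProduct.map εX counit

/-- The axioms (cobrz1)--(cobrz5) of a crossed coproduct. -/
structure IsCoBrzezinski (εX : X →ₗ[k] k) (W : X ⊗[k] C →ₗ[k] C ⊗[k] X)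
    (ρ : X ⊗[k] C →ₗ[k] X ⊗[k] X) : Prop where
  counit_W_left : (TensorProduct.rid k C).toLinearMap ∘ₗ lTensor C εX ∘ₗ W
      = (TensorProduct.lid k C).toLinearMap ∘ₗ rTensor C εX
  counit_W_right : (TensorProduct.lid k X).toLinearMap ∘ₗ rTensor X counit ∘ₗ W
      = (TensorProduct.rid k X).toLinearMap ∘ₗ lTensor X counit
  counit_ρ_left : (TensorProduct.rid k X).toLinearMap ∘ₗ lTensor X εX ∘ₗ ρ
      = (TensorProduct.rid k X).toLinearMap ∘ₗ lTensor X counit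
  counit_ρ_right : (TensorProduct.lid k X).toLinearMap ∘ₗ rTensor X εX ∘ₗ ρ
      = (TensorProduct.rid k X).toLinearMap ∘ₗ lTensor X counit
  cobrz3 : rTensor X comul ∘ₗ W
      = (TensorProduct.assoc k C C X).symm.toLinearMap ∘ₗ lTensor C W
        ∘ₗ (TensorProduct.assoc k C X C).toLinearMap ∘ₗ rTensor C W
        ∘ₗ (TensorProduct.assoc k X C C).symm.toLinearMap ∘ₗ lTensor X comul
  cobrz4 : rTensor X ρ ∘ₗ (TensorProduct.assoc k X C X).symm.toLinearMap
        ∘ₗ lTensor X W ∘ₗ (TensorProduct.assoc k X X C).toLinearMap ∘ₗ rTensor C ρ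
        ∘ₗ (TensorProduct.assoc k X C C).symm.toLinearMap ∘ₗ lTensor X comul
      = (TensorProduct.assoc k X X X).symm.toLinearMap ∘ₗ lTensor X ρ
        ∘ₗ (TensorProduct.assoc k X X C).toLinearMap ∘ₗ rTensor C ρ
        ∘ₗ (TensorProduct.assoc k X C C).symm.toLinearMap ∘ₗ lTensor X comul
  cobrz5 : rTensor X W ∘ₗ (TensorProduct.assoc k X C X).symm.toLinearMap
        ∘ₗ lTensor X W ∘ₗ (TensorProduct.assoc k X X C).toLinearMap ∘ₗ rTensor C ρ
        ∘ₗ (TensorProduct.assoc k X C C).symm.toLinearMap ∘ₗ lTensor X comul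
      = (TensorProduct.assoc k C X X).symm.toLinearMap ∘ₗ lTensor C ρ
        ∘ₗ (TensorProduct.assoc k C X C).toLinearMap ∘ₗ rTensor C W
        ∘ₗ (TensorProduct.assoc k X C C).symm.toLinearMap ∘ₗ lTensor X comul

end CoalgebraSide

section BialgebraSide

variable (A : Type u) [Ring A] [Bialgebra k A]
variable (C : Type u) [AddCommGroup C] [Module k C] [Coalgebra k C]

/-- `W₀ : A ⊗ C → C ⊗ A`, the flip. -/
def W0 : A ⊗[k] C →ₗ[k] C ⊗[k] A := (TensorProduct.comm k A C).toLinearMap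

/-- `g₀ : A ⊗ C → A`, `a ⊗ c ↦ ε_C(c) a`. -/
def g0 : A ⊗[k] C →ₗ[k] A :=
  (TensorProduct.rid k A).toLinearMap ∘ₗ lTensor A counit

/-- `ρ₀ : A ⊗ C → A ⊗ A`, `a ⊗ c ↦ ε_C(c) Δ_A(a)`. -/
def ρ0 : A ⊗[k] C →ₗ[k] A ⊗[k] A := comul ∘ₗ g0 k A C

variable {A C}

/-- The property that a comultiplication `Δ` on `Y` is a morphism of algebras, where the
multiplication on `Y` is `m` and the one on `Y ⊗ Y` is componentwise (with the middle flip). -/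
def DeltaIsMulMap {Y : Type u} [AddCommGroup Y] [Module k Y]
    (m : Y ⊗[k] Y →ₗ[k] Y) (Δ : Y →ₗ[k] Y ⊗[k] Y) : Prop :=
  Δ ∘ₗ m = TensorProduct.map m m ∘ₗ (tensorTensorTensorComm k Y Y Y Y).toLinearMap
    ∘ₗ TensorProduct.map Δ Δ

/-- The property that a counit `ε` on `Y` is a morphism of algebras. -/
def EpsIsMulMap {Y : Type u} [AddCommGroup Y] [Module k Y]
    (m : Y ⊗[k] Y →ₗ[k] Y) (ε : Y →ₗ[k] k) : Prop :=
  ε ∘ₗ m = mul' k k ∘ₗ TensorProduct.map ε ε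

/-- `A_{W₀}^{ρ₀} ⋈_R^σ C` is a cross product bialgebra: the crossed product algebra
`A ⊗_{R,σ} C` together with the tensor product coalgebra structure on `A ⊗ C`
form a bialgebra. -/
structure IsCrossBialgebra0 (eC : C) (R : C ⊗[k] A →ₗ[k] A ⊗[k] C)
    (σ : C ⊗[k] C →ₗ[k] A ⊗[k] C) : Prop where
  brz : IsBrzezinski k eC R σ
  delta_mul : DeltaIsMulMap k (brzMul k R σ) (Coalgebra.comul (R := k) (A := A ⊗[k] C))
  delta_one : Coalgebra.comul (R := k) (A := A ⊗[k] C) ((1 : A) ⊗ₜ eC)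
      = ((1 : A) ⊗ₜ eC) ⊗ₜ[k] ((1 : A) ⊗ₜ eC)
  eps_mul : EpsIsMulMap k (brzMul k R σ) (Coalgebra.counit (R := k) (A := A ⊗[k] C))
  eps_one : Coalgebra.counit (R := k) (A := A ⊗[k] C) ((1 : A) ⊗ₜ eC) = 1

/-- `A_{W}^{ρ} ⋈_R^σ C` is a cross product bialgebra: the crossed product algebra
`A ⊗_{R,σ} C` together with the crossed coproduct coalgebra `A_{W,ρ} ⊗ C`
form a bialgebra. -/
structure IsCrossBialgebra (eC : C) (R : C ⊗[k] A →ₗ[k] A ⊗[k] C)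
    (σ : C ⊗[k] C →ₗ[k] A ⊗[k] C) (W : A ⊗[k] C →ₗ[k] C ⊗[k] A)
    (ρ : A ⊗[k] C →ₗ[k] A ⊗[k] A) : Prop where
  brz : IsBrzezinski k eC R σ
  cobrz : IsCoBrzezinski k (Coalgebra.counit (R := k) (A := A)) W ρ
  delta_mul : DeltaIsMulMap k (brzMul k R σ) (coDelta k W ρ)
  delta_one : coDelta k W ρ ((1 : A) ⊗ₜ eC) = ((1 : A) ⊗ₜ eC) ⊗ₜ[k] ((1 : A) ⊗ₜ eC)
  eps_mul : EpsIsMulMap k (brzMul k R σ) (coEps k (Coalgebra.counit (R := k) (A := A)))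
  eps_one : coEps k (Coalgebra.counit (R := k) (A := A)) ((1 : A) ⊗ₜ eC) = 1

/-- The right `C`-coaction `a ⊗ c ↦ (a ⊗ c₁) ⊗ c₂` on `A ⊗ C`. -/
def coactC : A ⊗[k] C →ₗ[k] (A ⊗[k] C) ⊗[k] C :=
  (TensorProduct.assoc k A C C).symm.toLinearMap ∘ₗ lTensor A comul

/-- The counit condition (extra1) for a map `θ : C → A ⊗ C`. -/
def CounitCond (θ : C →ₗ[k] A ⊗[k] C) : Prop :=
  (TensorProduct.lid k k).toLinearMap
      ∘ₗ TensorProduct.map (Coalgebra.counit (R := k) (A := A)) counit ∘ₗ θ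
    = (counit : C →ₗ[k] k)

/-- The right `C`-comodule condition (extra2)/(extra3) for a map `θ : C → A ⊗ C`. -/
def ComodCond (θ : C →ₗ[k] A ⊗[k] C) : Prop :=
  lTensor A comul ∘ₗ θ
    = (TensorProduct.assoc k A C C).toLinearMap ∘ₗ rTensor C θ ∘ₗ comul

/-- The map `c ↦ ε_A(c_{<-1>}) c_{<0>}`. -/
def epsFirst (θ : C →ₗ[k] A ⊗[k] C) : C →ₗ[k] C :=
  (TensorProduct.lid k C).toLinearMap
    ∘ₗ rTensor C (Coalgebra.counit (R := k) (A := A)) ∘ₗ θ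

/-- The map `W'` built from `(θ, γ)`; `h` is applied to the first output factor
(`h = id` for formula (Wprimnou), `h = epsFirst γ` for formula (Wprim)). -/
def Wtw (θ γ : C →ₗ[k] A ⊗[k] C) (h : C →ₗ[k] C) : A ⊗[k] C →ₗ[k] C ⊗[k] A :=
  lTensor C (mul' k A) ∘ₗ (TensorProduct.assoc k C A A).toLinearMap
    ∘ₗ rTensor A (TensorProduct.comm k A C).toLinearMap
    ∘ₗ (TensorProduct.assoc k A C A).symm.toLinearMap
    ∘ₗ rTensor (C ⊗[k] A) (mul' k A)
    ∘ₗ (TensorProduct.assoc k A A (C ⊗[k] A)).symm.toLinearMap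
    ∘ₗ lTensor A (lTensor A (TensorProduct.map h (g0 k A C ∘ₗ γ) ∘ₗ comul) ∘ₗ θ)

/-- Componentwise multiplication `(A ⊗ A) ⊗ (A ⊗ A) → A ⊗ A` (with the middle flip). -/
def mulPair : (A ⊗[k] A) ⊗[k] (A ⊗[k] A) →ₗ[k] A ⊗[k] A :=
  TensorProduct.map (mul' k A) (mul' k A) ∘ₗ (tensorTensorTensorComm k A A A A).toLinearMap

/-- The map `c ↦ c_{{-1}} ⊗ ε_C(c_{{0}}_{{0}}) c_{{0}}_{{-1}}`. -/
def lamAux (γ : C →ₗ[k] A ⊗[k] C) : C →ₗ[k] A ⊗[k] A :=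
  lTensor A (g0 k A C ∘ₗ γ) ∘ₗ γ

/-- The map `κ` appearing in the formula (rhoprim). -/
def kapAux (θ γ : C →ₗ[k] A ⊗[k] C) : C →ₗ[k] A ⊗[k] A :=
  mulPair k ∘ₗ TensorProduct.map comul (lamAux k γ) ∘ₗ θ

/-- The map `ρ'` of formula (rhoprim). -/
def ρtw (θ γ : C →ₗ[k] A ⊗[k] C) : A ⊗[k] C →ₗ[k] A ⊗[k] A :=
  mulPair k ∘ₗ TensorProduct.map comul (kapAux k θ γ)

/-- Auxiliary map for the explicit formula (deltaprim). -/
def eAux (θ γ : C →ₗ[k] A ⊗[k] C) : C →ₗ[k] (A ⊗[k] C) ⊗[k] A :=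
  (TensorProduct.assoc k A C A).symm.toLinearMap
    ∘ₗ lTensor A (TensorProduct.comm k A C).toLinearMap
    ∘ₗ TensorProduct.map (mul' k A) LinearMap.id
    ∘ₗ (tensorTensorTensorComm k A A A C).toLinearMap
    ∘ₗ TensorProduct.map comul γ ∘ₗ θ

/-- Auxiliary map for the explicit formula (deltaprim). -/
def dAux (θ γ : C →ₗ[k] A ⊗[k] C) : C →ₗ[k] (A ⊗[k] C) ⊗[k] (A ⊗[k] C) :=
  lTensor (A ⊗[k] C) (muls2 k A C)
    ∘ₗ (TensorProduct.assoc k (A ⊗[k] C) A (A ⊗[k] C)).toLinearMap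
    ∘ₗ TensorProduct.map (eAux k θ γ) γ ∘ₗ comul

/-- The explicit formula (deltaprim) for the comultiplication `Δ'`. -/
def deltaExplicit (θ γ : C →ₗ[k] A ⊗[k] C) :
    A ⊗[k] C →ₗ[k] (A ⊗[k] C) ⊗[k] (A ⊗[k] C) :=
  TensorProduct.map (muls2 k A C) (muls2 k A C)
    ∘ₗ (tensorTensorTensorComm k A A (A ⊗[k] C) (A ⊗[k] C)).toLinearMap
    ∘ₗ TensorProduct.map comul (dAux k θ γ)

/-- The conditions (cros1)--(cros4) and (extra1)--(extra3) on `(θ, γ)`. -/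
def TwistConditions (eC : C) (R : C ⊗[k] A →ₗ[k] A ⊗[k] C)
    (σ : C ⊗[k] C →ₗ[k] A ⊗[k] C) (θ γ : C →ₗ[k] A ⊗[k] C) : Prop :=
  Cros123 k eC θ γ ∧ Cros4 k R σ γ (σtw k R σ θ γ) ∧
  CounitCond k θ ∧ CounitCond k γ ∧ ComodCond k θ ∧ ComodCond k γ

/-- Equivalence of cross product bialgebras: a linear isomorphism which is a morphism of
bialgebras, of left `A`-modules and of right `C`-comodules; the target is the cross product
bialgebra `A_{W₀}^{ρ₀} ⋈_R^σ C` (with tensor product coalgebra structure), the source is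
`A_{W'}^{ρ'} ⋈_{R'}^{σ'} C`. -/
def CrossEquiv (eC : C) (R : C ⊗[k] A →ₗ[k] A ⊗[k] C) (σ : C ⊗[k] C →ₗ[k] A ⊗[k] C)
    (R' : C ⊗[k] A →ₗ[k] A ⊗[k] C) (σ' : C ⊗[k] C →ₗ[k] A ⊗[k] C)
    (W' : A ⊗[k] C →ₗ[k] C ⊗[k] A) (ρ' : A ⊗[k] C →ₗ[k] A ⊗[k] A) : Prop :=
  ∃ φ : (A ⊗[k] C) ≃ₗ[k] A ⊗[k] C,
    (∀ x y : A ⊗[k] C, φ (brzMul k R' σ' (x ⊗ₜ y)) = brzMul k R σ (φ x ⊗ₜ φ y)) ∧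
    φ ((1 : A) ⊗ₜ eC) = (1 : A) ⊗ₜ eC ∧
    TensorProduct.map φ.toLinearMap φ.toLinearMap ∘ₗ coDelta k W' ρ'
      = Coalgebra.comul (R := k) (A := A ⊗[k] C) ∘ₗ φ.toLinearMap ∧
    Coalgebra.counit (R := k) (A := A ⊗[k] C) ∘ₗ φ.toLinearMap
      = coEps k (Coalgebra.counit (R := k) (A := A)) ∧
    (∀ (a : A) (x : A ⊗[k] C), φ (muls2 k A C (a ⊗ₜ x)) = muls2 k A C (a ⊗ₜ φ x)) ∧
    rTensor C φ.toLinearMap ∘ₗ coactC k = coactC k ∘ₗ φ.toLinearMap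

end BialgebraSide


section Drinfeld

variable (H : Type u) [Ring H] [HopfAlgebra k H]

/-- Convolution product on `H* = Dual k H`: `(p * q)(h) = p(h₁) q(h₂)`. -/
def conv : Module.Dual k H ⊗[k] Module.Dual k H →ₗ[k] Module.Dual k H :=
  (Coalgebra.comul (R := k) (A := H)).dualMap ∘ₗ TensorProduct.dualDistrib k H H

/-- The left regular action `h ⊗ p ↦ h ⇀ p`, `(h ⇀ p)(h') = p(h'h)`. -/
def lact : H ⊗[k] Module.Dual k H →ₗ[k] Module.Dual k H :=
  TensorProduct.lift ((lcomp k (Module.Dual k H) ((LinearMap.mul k H).flip)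
    ∘ₗ llcomp k H H k).flip)

/-- The right regular action `p ⊗ h ↦ p ↼ h`, `(p ↼ h)(h') = p(hh')`. -/
def ract : Module.Dual k H ⊗[k] H →ₗ[k] Module.Dual k H :=
  TensorProduct.lift (lcomp k (Module.Dual k H) (LinearMap.mul k H)
    ∘ₗ llcomp k H H k)

/-- The map `h ⊗ p ↦ (h₁ ⇀ p ↼ S⁻¹(h₃)) ⊗ h₂`, where `Sinv` plays the role of `S⁻¹`. -/
def dPhi (Sinv : H →ₗ[k] H) :
    H ⊗[k] Module.Dual k H →ₗ[k] Module.Dual k H ⊗[k] H :=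
  rTensor H (lact k H)
    ∘ₗ (TensorProduct.assoc k H (Module.Dual k H) H).symm.toLinearMap
    ∘ₗ lTensor H (TensorProduct.comm k H (Module.Dual k H)).toLinearMap
    ∘ₗ lTensor H (lTensor H (ract k H
        ∘ₗ (TensorProduct.comm k H (Module.Dual k H)).toLinearMap
        ∘ₗ rTensor (Module.Dual k H) Sinv))
    ∘ₗ lTensor H (TensorProduct.assoc k H H (Module.Dual k H)).toLinearMap
    ∘ₗ (TensorProduct.assoc k H (H ⊗[k] H) (Module.Dual k H)).toLinearMap
    ∘ₗ rTensor (Module.Dual k H) (lTensor H comul ∘ₗ comul)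

/-- The multiplication of the Drinfeld double:
`(p ⊗ h)(p' ⊗ h') = p (h₁ ⇀ p' ↼ S⁻¹(h₃)) ⊗ h₂ h'`. -/
def dMul (Sinv : H →ₗ[k] H) :
    (Module.Dual k H ⊗[k] H) ⊗[k] (Module.Dual k H ⊗[k] H) →ₗ[k]
      Module.Dual k H ⊗[k] H :=
  rTensor H (conv k H)
    ∘ₗ (TensorProduct.assoc k (Module.Dual k H) (Module.Dual k H) H).symm.toLinearMap
    ∘ₗ lTensor (Module.Dual k H)
        (lTensor (Module.Dual k H) (mul' k H)
          ∘ₗ (TensorProduct.assoc k (Module.Dual k H) H H).toLinearMap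
          ∘ₗ rTensor H (dPhi k H Sinv)
          ∘ₗ (TensorProduct.assoc k H (Module.Dual k H) H).symm.toLinearMap)
    ∘ₗ (TensorProduct.assoc k (Module.Dual k H) H
          (Module.Dual k H ⊗[k] H)).toLinearMap

/-- The comultiplication of `H*`, dual to the multiplication of `H` (finite dimensional). -/
def comulD [FiniteDimensional k H] :
    Module.Dual k H →ₗ[k] Module.Dual k H ⊗[k] Module.Dual k H :=
  (TensorProduct.dualDistribEquiv k H H).symm.toLinearMap ∘ₗ (mul' k H).dualMap

/-- The comultiplication of `H^{*cop}`. -/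
def comulDcop [FiniteDimensional k H] :
    Module.Dual k H →ₗ[k] Module.Dual k H ⊗[k] Module.Dual k H :=
  (TensorProduct.comm k (Module.Dual k H) (Module.Dual k H)).toLinearMap ∘ₗ comulD k H

/-- The counit of `H*`: evaluation at `1`. -/
def counitD : Module.Dual k H →ₗ[k] k := Module.Dual.eval k H 1

/-- The comultiplication of the tensor product coalgebra `H^{*cop} ⊗ H`. -/
def deltaD [FiniteDimensional k H] :
    Module.Dual k H ⊗[k] H →ₗ[k]
      (Module.Dual k H ⊗[k] H) ⊗[k] (Module.Dual k H ⊗[k] H) :=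
  (tensorTensorTensorComm k (Module.Dual k H) (Module.Dual k H) H H).toLinearMap
    ∘ₗ TensorProduct.map (comulDcop k H) comul

/-- The counit of the tensor product coalgebra `H^{*cop} ⊗ H`. -/
def epsD : Module.Dual k H ⊗[k] H →ₗ[k] k :=
  (TensorProduct.lid k k).toLinearMap
    ∘ₗ TensorProduct.map (counitD k H) (Coalgebra.counit (R := k) (A := H))

/-- The left `H^{*cop}`-coaction on `H^{*cop} ⊗ H`: `p ⊗ h ↦ p₂ ⊗ (p₁ ⊗ h)`. -/
def coactD [FiniteDimensional k H] :
    Module.Dual k H ⊗[k] H →ₗ[k]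
      Module.Dual k H ⊗[k] (Module.Dual k H ⊗[k] H) :=
  (TensorProduct.assoc k (Module.Dual k H) (Module.Dual k H) H).toLinearMap
    ∘ₗ rTensor H (comulDcop k H)

/-- `r₁₂ ∈ H ⊗ (H ⊗ H)` for `r ∈ H ⊗ H`. -/
def r12 (r : H ⊗[k] H) : H ⊗[k] (H ⊗[k] H) :=
  lTensor H ((TensorProduct.mk k H H).flip 1) r

/-- `r₁₃ ∈ H ⊗ (H ⊗ H)` for `r ∈ H ⊗ H`. -/
def r13 (r : H ⊗[k] H) : H ⊗[k] (H ⊗[k] H) :=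
  lTensor H (TensorProduct.mk k H H 1) r

/-- `r₂₃ ∈ H ⊗ (H ⊗ H)` for `r ∈ H ⊗ H`. -/
def r23 (r : H ⊗[k] H) : H ⊗[k] (H ⊗[k] H) := (1 : H) ⊗ₜ r

/-- `r` is a quasitriangular structure on `H`. -/
structure IsQuasitriangular (r : H ⊗[k] H) : Prop where
  qt1 : (TensorProduct.assoc k H H H) (rTensor H comul r) = r13 k H r * r23 k H r
  qt2 : lTensor H comul r = r13 k H r * r12 k H r
  qt3 : ∀ h : H, (TensorProduct.comm k H H) (comul h) * r = r * comul h
  qt4l : (TensorProduct.lid k H)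
      (rTensor H (Coalgebra.counit (R := k) (A := H)) r) = 1
  qt4r : (TensorProduct.rid k H)
      (lTensor H (Coalgebra.counit (R := k) (A := H)) r) = 1

/-- Majid's map `φ(p ⊗ h) = (p ↼ S⁻¹(r¹)) ⊗ r² h`. -/
def phiMajid (r : H ⊗[k] H) (Sinv : H →ₗ[k] H) :
    Module.Dual k H ⊗[k] H →ₗ[k] Module.Dual k H ⊗[k] H :=
  TensorProduct.map (ract k H ∘ₗ lTensor (Module.Dual k H) Sinv)
      (mul' k H ∘ₗ (TensorProduct.comm k H H).toLinearMap)
    ∘ₗ (tensorTensorTensorComm k (Module.Dual k H) H H H).toLinearMap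
    ∘ₗ (TensorProduct.mk k (Module.Dual k H ⊗[k] H) (H ⊗[k] H)).flip r

end Drinfeld

end Paper

universe u
open Paper

section Aux11

open TensorProduct LinearMap Coalgebra

variable {k A : Type u} [Field k] [Ring A] [Bialgebra k A]
variable {D D' : Type u} [AddCommGroup D] [Module k D] [AddCommGroup D'] [Module k D']

/-- `a ⊗ d ↦ ε_A(a) • d`. -/
def elA (k A : Type u) [Field k] [Ring A] [Bialgebra k A]
    (D : Type u) [AddCommGroup D] [Module k D] : A ⊗[k] D →ₗ[k] D :=
  (TensorProduct.lid k D).toLinearMap ∘ₗ rTensor D (Coalgebra.counit (R := k) (A := A))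

lemma elA_tmul (a : A) (d : D) :
    elA k A D (a ⊗ₜ d) = Coalgebra.counit (R := k) (A := A) a • d := by
  simp [elA]

lemma elA_nat (f : D →ₗ[k] D') : elA k A D' ∘ₗ lTensor A f = f ∘ₗ elA k A D := by
  ext a d
  simp [elA]

lemma elA_muls2 : elA k A D ∘ₗ muls2 k A D = elA k A D ∘ₗ lTensor A (elA k A D) := by
  ext a b d
  simp [elA, muls2, mul_smul]
  exact smul_comm _ _ _

lemma elA_assoc :
    elA k A (D ⊗[k] D') ∘ₗ (TensorProduct.assoc k A D D').toLinearMap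
      = rTensor D' (elA k A D) := by
  ext a d d'
  simp [elA, smul_tmul']

lemma elA_mk : elA k A D ∘ₗ TensorProduct.mk k A D 1 = LinearMap.id := by
  ext d
  simp [elA]

variable {C : Type u} [AddCommGroup C] [Module k C] [Coalgebra k C]

lemma counit_elA :
    (Coalgebra.counit : C →ₗ[k] k) ∘ₗ elA k A C
      = (TensorProduct.lid k k).toLinearMap
          ∘ₗ TensorProduct.map (Coalgebra.counit (R := k) (A := A)) Coalgebra.counit := by
  ext a c
  simp [elA, mul_comm]

lemma lid_rTensor_counit_comul :
    (TensorProduct.lid k C).toLinearMap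
        ∘ₗ rTensor C (Coalgebra.counit (R := k) (A := C)) ∘ₗ Coalgebra.comul
      = LinearMap.id := by
  rw [Coalgebra.rTensor_counit_comp_comul]
  ext c
  simp

lemma mapg0 (θ γ : C →ₗ[k] A ⊗[k] C) :
    TensorProduct.map (g0 k A C ∘ₗ θ) γ
      = TensorProduct.map (g0 k A C) γ ∘ₗ rTensor C θ := by
  have : rTensor C θ = TensorProduct.map θ LinearMap.id := rfl
  rw [this, ← TensorProduct.map_comp, LinearMap.comp_id]

lemma key3 (γ : C →ₗ[k] A ⊗[k] C) :
    muls2 k A C ∘ₗ TensorProduct.map (g0 k A C) γ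
        ∘ₗ (TensorProduct.assoc k A C C).symm.toLinearMap
      = muls2 k A C ∘ₗ lTensor A γ
        ∘ₗ lTensor A ((TensorProduct.lid k C).toLinearMap
            ∘ₗ rTensor C (Coalgebra.counit (R := k) (A := C))) := by
  ext a x y
  simp [muls2, g0, TensorProduct.smul_tmul']

end Aux11

/-- from (cros2), (extra1) for `θ` and (extra2) one derives
(cucu1): `ε_C(c₁_{<0>}) c₁_{<-1>} c₂_{{-1}} ⊗ c₂_{{0}} = 1_A ⊗ c` and
(cucu4): `ε_A(c_{{-1}}) c_{{0}} = c`. -/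
theorem statement11 {k A C : Type u} [Field k] [Ring A] [Bialgebra k A]
    [AddCommGroup C] [Module k C] [Coalgebra k C] (eC : C)
    (R : C ⊗[k] A →ₗ[k] A ⊗[k] C) (σ : C ⊗[k] C →ₗ[k] A ⊗[k] C)
    (hcross : IsCrossBialgebra0 k eC R σ)
    (θ γ : C →ₗ[k] A ⊗[k] C)
    (hcros2 : muls2 k A C ∘ₗ lTensor A γ ∘ₗ θ = TensorProduct.mk k A C 1)
    (hextra1 : CounitCond k θ) (hextra2 : ComodCond k θ) :
    muls2 k A C ∘ₗ TensorProduct.map (g0 k A C ∘ₗ θ) γ ∘ₗ Coalgebra.comul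
      = TensorProduct.mk k A C 1 ∧
    epsFirst k γ = LinearMap.id := by

  have hex2 : lTensor A Coalgebra.comul ∘ₗ θ
      = (TensorProduct.assoc k A C C).toLinearMap ∘ₗ rTensor C θ ∘ₗ Coalgebra.comul :=
    hextra2
  have hex1 : (TensorProduct.lid k k).toLinearMap
      ∘ₗ TensorProduct.map (Coalgebra.counit (R := k) (A := A)) Coalgebra.counit ∘ₗ θ
      = (Coalgebra.counit : C →ₗ[k] k) := hextra1
  set p : C →ₗ[k] C := elA k A C ∘ₗ θ with hpdef
  -- comul ∘ p = (p ⊗ id) ∘ comul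
  have h1 : ∀ c : C, Coalgebra.comul (p c) = rTensor C p (Coalgebra.comul c) := by
    intro c
    have e1 := LinearMap.congr_fun (elA_nat (k := k) (A := A)
      (Coalgebra.comul : C →ₗ[k] C ⊗[k] C)) (θ c)
    have e2 := LinearMap.congr_fun hex2 c
    have e3 := LinearMap.congr_fun (elA_assoc (k := k) (A := A) (D := C) (D' := C))
      (rTensor C θ (Coalgebra.comul c))
    have e4 := LinearMap.congr_fun (rTensor_comp C (elA k A C) θ) (Coalgebra.comul c)
    simp only [LinearMap.comp_apply, LinearEquiv.coe_coe] at e1 e2 e3 e4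
    calc Coalgebra.comul (p c) = elA k A (C ⊗[k] C) (lTensor A Coalgebra.comul (θ c)) := by
          simp only [hpdef, LinearMap.comp_apply]; exact e1.symm
      _ = elA k A (C ⊗[k] C)
            ((TensorProduct.assoc k A C C) (rTensor C θ (Coalgebra.comul c))) := by
          rw [e2]
      _ = rTensor C (elA k A C) (rTensor C θ (Coalgebra.comul c)) := e3
      _ = rTensor C p (Coalgebra.comul c) := e4.symm
  -- counit ∘ p = counit
  have h2 : ∀ c : C, Coalgebra.counit (R := k) (p c) = Coalgebra.counit (R := k) c := by
    intro c
    have e1 := LinearMap.congr_fun (counit_elA (k := k) (A := A) (C := C)) (θ c)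
    have e2 := LinearMap.congr_fun hex1 c
    simp only [LinearMap.comp_apply, LinearEquiv.coe_coe] at e1 e2
    calc Coalgebra.counit (R := k) (p c)
        = (TensorProduct.lid k k) (TensorProduct.map
            (Coalgebra.counit (R := k) (A := A)) Coalgebra.counit (θ c)) := by
          simp only [hpdef, LinearMap.comp_apply]; exact e1
      _ = Coalgebra.counit (R := k) c := e2
  -- p = id
  have hp : ∀ c : C, p c = c := by
    intro c
    have law := fun x : C => LinearMap.congr_fun
      (lid_rTensor_counit_comul (k := k) (C := C)) x
    simp only [LinearMap.comp_apply, LinearEquiv.coe_coe, LinearMap.id_apply] at law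
    have e4 := LinearMap.congr_fun
      (rTensor_comp C (Coalgebra.counit (R := k) (A := C)) p) (Coalgebra.comul c)
    simp only [LinearMap.comp_apply] at e4
    have hcp : (Coalgebra.counit (R := k) (A := C)) ∘ₗ p
        = (Coalgebra.counit (R := k) (A := C)) := LinearMap.ext h2
    calc p c = (TensorProduct.lid k C)
          (rTensor C (Coalgebra.counit (R := k) (A := C)) (Coalgebra.comul (p c))) :=
        (law (p c)).symm
      _ = (TensorProduct.lid k C) (rTensor C (Coalgebra.counit (R := k) (A := C))
            (rTensor C p (Coalgebra.comul c))) := by rw [h1 c]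
      _ = (TensorProduct.lid k C)
            (rTensor C ((Coalgebra.counit (R := k) (A := C)) ∘ₗ p)
              (Coalgebra.comul c)) := by rw [e4]
      _ = c := by rw [hcp]; exact law c
  constructor
  · -- (cucu1)
    apply LinearMap.ext
    intro c
    have e0 := LinearMap.congr_fun (mapg0 θ γ) (Coalgebra.comul c)
    have e2 := LinearMap.congr_fun hex2 c
    have e3 := LinearMap.congr_fun (key3 (k := k) (A := A) γ)
      (lTensor A Coalgebra.comul (θ c))
    have e5 := LinearMap.congr_fun hcros2 c
    have e6 := LinearMap.congr_fun (lTensor_comp A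
      ((TensorProduct.lid k C).toLinearMap
        ∘ₗ rTensor C (Coalgebra.counit (R := k) (A := C))) (Coalgebra.comul : C →ₗ[k] C ⊗[k] C)) (θ c)
    have e7 : lTensor A (((TensorProduct.lid k C).toLinearMap
        ∘ₗ rTensor C (Coalgebra.counit (R := k) (A := C))) ∘ₗ Coalgebra.comul)
        = LinearMap.id (R := k) (M := A ⊗[k] C) := by
      rw [LinearMap.comp_assoc, lid_rTensor_counit_comul, lTensor_id]
    have e8 : rTensor C θ (Coalgebra.comul c)
        = (TensorProduct.assoc k A C C).symm (lTensor A Coalgebra.comul (θ c)) := by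
      simp only [LinearMap.comp_apply, LinearEquiv.coe_coe] at e2
      rw [e2, LinearEquiv.symm_apply_apply]
    simp only [LinearMap.comp_apply, LinearEquiv.coe_coe] at e0 e3 e5 e6 ⊢
    rw [e0, e8, e3, ← e6, LinearMap.congr_fun e7 (θ c)]
    simpa using e5
  · -- (cucu4)
    apply LinearMap.ext
    intro c
    have e5 := LinearMap.congr_fun hcros2 c
    have eq1 : elA k A C (muls2 k A C (lTensor A γ (θ c)))
        = elA k A C (TensorProduct.mk k A C 1 c) := by
      simp only [LinearMap.comp_apply] at e5
      rw [e5]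
    have e6 := LinearMap.congr_fun (elA_muls2 (k := k) (A := A) (D := C))
      (lTensor A γ (θ c))
    have e7 := LinearMap.congr_fun (lTensor_comp A (elA k A C) γ) (θ c)
    have e8 := LinearMap.congr_fun (elA_nat (k := k) (A := A)
      ((elA k A C) ∘ₗ γ)) (θ c)
    simp only [LinearMap.comp_apply] at e6 e7 e8
    have : epsFirst k γ c = elA k A C (γ c) := rfl
    rw [this]
    have : elA k A C (γ c) = elA k A C (γ (p c)) := by rw [hp c]
    rw [this]
    have final : elA k A C (γ (p c)) = c := by
      have := eq1
      rw [e6, ← e7, e8] at this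
      simp [elA_tmul, TensorProduct.mk_apply, Bialgebra.counit_one] at this
      exact this
    rw [LinearMap.id_apply]
    exact final
end
end

section
/- Let A be an associative unital algebra, and let B, B' be two associative unital algebra structures on the same vector space with the same unit 1_B, with multiplications (b,b') ↦ bb' and (b,b') ↦ b*b'. Two twisted tensor products A ⊗_R B and A ⊗_{R'} B' are A-equivalent (there is an algebra isomorphism φ : A⊗_{R'}B' → A⊗_R B with φ(a⊗1_B) = a⊗1_B) if and only if there exist linear maps θ, γ : B → A⊗B, θ(b) = b_{<-1>}⊗b_{<0>}, γ(b) = b_{\{-1\}}⊗b_{\{0\}}, such that: θ is an algebra map from B' to A⊗_R B; γ(1_B) = 1_A⊗1_B; γ(bb') = b'_{\{-1\}_R} b_{R_{\{-1\}}} ⊗ b_{R_{\{0\}}} * b'_{\{0\}}; b_{<-1>} b_{<0>_{\{-1\}}} ⊗ b_{<0>_{\{0\}}} = 1⊗b; b_{\{-1\}} b_{\{0\}_{<-1>}} ⊗ b_{\{0\}_{<0>}} = 1⊗b; and R'(b⊗a) = b_{<-1>} a_R b_{<0>_{R_{\{-1\}}}} ⊗ b_{<0>_{R_{\{0\}}}}.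 -/
open TensorProduct LinearMap Coalgebra

noncomputable section

universe u
open Paper

namespace Stmt13Aux

variable {k A B : Type u} [Field k] [Ring A] [Algebra k A]
  [AddCommGroup B] [Module k B]

lemma muls2_tmul (a c : A) (d : B) :
    muls2 k A B (a ⊗ₜ (c ⊗ₜ d)) = (a * c) ⊗ₜ d := by
  simp [muls2, mul'_apply]

lemma muls2_one (z : A ⊗[k] B) : muls2 k A B ((1 : A) ⊗ₜ z) = z := by
  induction z using TensorProduct.induction_on with
  | zero => simp
  | tmul c d => simp [muls2_tmul]
  | add x y hx hy => simp only [tmul_add, add_tmul, map_add, hx, hy]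

lemma muls2_muls2 (a c : A) (z : A ⊗[k] B) :
    muls2 k A B (a ⊗ₜ muls2 k A B (c ⊗ₜ z)) = muls2 k A B ((a * c) ⊗ₜ z) := by
  induction z using TensorProduct.induction_on with
  | zero => simp
  | tmul x y => simp [muls2_tmul, mul_assoc]
  | add x y hx hy => simp only [tmul_add, add_tmul, map_add, hx, hy]

/-- `Φ g = muls2 ∘ (id ⊗ g)`. -/
def Φ (g : B →ₗ[k] A ⊗[k] B) : A ⊗[k] B →ₗ[k] A ⊗[k] B :=
  muls2 k A B ∘ₗ lTensor A g

lemma Φ_tmul (g : B →ₗ[k] A ⊗[k] B) (a : A) (b : B) :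
    Φ g (a ⊗ₜ b) = muls2 k A B (a ⊗ₜ g b) := by
  simp [Φ]

lemma Φ_lsmul (g : B →ₗ[k] A ⊗[k] B) (a : A) (z : A ⊗[k] B) :
    Φ g (muls2 k A B (a ⊗ₜ z)) = muls2 k A B (a ⊗ₜ Φ g z) := by
  induction z using TensorProduct.induction_on with
  | zero => simp
  | tmul c d => rw [muls2_tmul, Φ_tmul, Φ_tmul, muls2_muls2]
  | add x y hx hy => simp only [tmul_add, add_tmul, map_add, hx, hy]

/-- `N m ((x ⊗ y) ⊗ d) = x ⊗ m (y ⊗ d)`. -/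
def Nm (m : B ⊗[k] B →ₗ[k] B) : (A ⊗[k] B) ⊗[k] B →ₗ[k] A ⊗[k] B :=
  lTensor A m ∘ₗ (TensorProduct.assoc k A B B).toLinearMap

lemma Nm_tmul (m : B ⊗[k] B →ₗ[k] B) (x : A) (y d : B) :
    Nm m ((x ⊗ₜ y) ⊗ₜ d) = x ⊗ₜ m (y ⊗ₜ d) := by
  simp [Nm]

lemma Nm_e (m : B ⊗[k] B →ₗ[k] B) (e : B) (hm_r : ∀ b : B, m (b ⊗ₜ e) = b)
    (z : A ⊗[k] B) : Nm m (z ⊗ₜ e) = z := by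
  induction z using TensorProduct.induction_on with
  | zero => simp
  | tmul x y => rw [Nm_tmul, hm_r]
  | add x y hx hy => simp only [tmul_add, add_tmul, map_add, hx, hy]

lemma Nm_lsmul (m : B ⊗[k] B →ₗ[k] B) (a : A) (z : A ⊗[k] B) (d : B) :
    Nm m (muls2 k A B (a ⊗ₜ z) ⊗ₜ d) = muls2 k A B (a ⊗ₜ Nm m (z ⊗ₜ d)) := by
  induction z using TensorProduct.induction_on with
  | zero => simp
  | tmul x y => rw [muls2_tmul, Nm_tmul, Nm_tmul, muls2_tmul]
  | add x y hx hy => simp only [tmul_add, add_tmul, map_add, hx, hy]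

/-- `Vm R ((x ⊗ y) ⊗ a) = x ⬝ R (y ⊗ a)`. -/
def Vm (R : B ⊗[k] A →ₗ[k] A ⊗[k] B) : (A ⊗[k] B) ⊗[k] A →ₗ[k] A ⊗[k] B :=
  muls2 k A B ∘ₗ lTensor A R ∘ₗ (TensorProduct.assoc k A B A).toLinearMap

lemma Vm_tmul (R : B ⊗[k] A →ₗ[k] A ⊗[k] B) (x : A) (y : B) (a : A) :
    Vm R ((x ⊗ₜ y) ⊗ₜ a) = muls2 k A B (x ⊗ₜ R (y ⊗ₜ a)) := by
  simp [Vm]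

lemma Vm_one (R : B ⊗[k] A →ₗ[k] A ⊗[k] B) (y : B) (a : A) :
    Vm R (((1 : A) ⊗ₜ y) ⊗ₜ a) = R (y ⊗ₜ a) := by
  rw [Vm_tmul, muls2_one]

lemma Vm_lsmul (R : B ⊗[k] A →ₗ[k] A ⊗[k] B) (a : A) (z : A ⊗[k] B) (c : A) :
    Vm R (muls2 k A B (a ⊗ₜ z) ⊗ₜ c) = muls2 k A B (a ⊗ₜ Vm R (z ⊗ₜ c)) := by
  induction z using TensorProduct.induction_on with
  | zero => simp
  | tmul x y => rw [muls2_tmul, Vm_tmul, Vm_tmul, muls2_muls2]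
  | add x y hx hy => simp only [tmul_add, add_tmul, map_add, hx, hy]

lemma ttMul_tmul (R : B ⊗[k] A →ₗ[k] A ⊗[k] B) (m : B ⊗[k] B →ₗ[k] B)
    (a : A) (b : B) (c : A) (d : B) :
    ttMul k R m ((a ⊗ₜ b) ⊗ₜ (c ⊗ₜ d))
      = muls2 k A B (a ⊗ₜ Nm m (R (b ⊗ₜ c) ⊗ₜ d)) := by
  simp [ttMul, Nm]


section TLemmas

variable (R : B ⊗[k] A →ₗ[k] A ⊗[k] B) (m : B ⊗[k] B →ₗ[k] B)

lemma ttMul_lsmul (a : A) (z w : A ⊗[k] B) :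
    ttMul k R m (muls2 k A B (a ⊗ₜ z) ⊗ₜ w)
      = muls2 k A B (a ⊗ₜ ttMul k R m (z ⊗ₜ w)) := by
  induction z using TensorProduct.induction_on with
  | zero => simp
  | tmul x y =>
      induction w using TensorProduct.induction_on with
      | zero => simp
      | tmul c d => rw [muls2_tmul, ttMul_tmul, ttMul_tmul, muls2_muls2]
      | add u v hu hv => simp only [tmul_add, add_tmul, map_add, hu, hv]
  | add x y hx hy => simp only [tmul_add, add_tmul, map_add, hx, hy]

lemma ttMul_form (z : A ⊗[k] B) (c : A) (d : B) :
    ttMul k R m (z ⊗ₜ (c ⊗ₜ d)) = Nm m (Vm R (z ⊗ₜ c) ⊗ₜ d) := by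
  induction z using TensorProduct.induction_on with
  | zero => simp
  | tmul x y => rw [ttMul_tmul, Vm_tmul, Nm_lsmul]
  | add x y hx hy => simp only [tmul_add, add_tmul, map_add, hx, hy]

variable {e : B}

lemma mulA_point (hR : IsTwisting k R m e) (d : B) (a f : A) :
    R (d ⊗ₜ (a * f)) = Vm R (R (d ⊗ₜ a) ⊗ₜ f) := by
  have h := LinearMap.congr_fun hR.mul_A (d ⊗ₜ (a ⊗ₜ f))
  simpa [Vm, muls2, mul'_apply] using h

lemma Vm_assoc (hR : IsTwisting k R m e) (z : A ⊗[k] B) (a f : A) :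
    Vm R (z ⊗ₜ (a * f)) = Vm R (Vm R (z ⊗ₜ a) ⊗ₜ f) := by
  induction z using TensorProduct.induction_on with
  | zero => simp
  | tmul c d => rw [Vm_tmul, mulA_point R m hR, Vm_tmul, Vm_lsmul]
  | add x y hx hy => simp only [tmul_add, add_tmul, map_add, hx, hy]

lemma ttMul_mulsA (hR : IsTwisting k R m e) (z : A ⊗[k] B) (a : A) (w : A ⊗[k] B) :
    ttMul k R m (z ⊗ₜ muls2 k A B (a ⊗ₜ w)) = ttMul k R m (Vm R (z ⊗ₜ a) ⊗ₜ w) := by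
  induction w using TensorProduct.induction_on with
  | zero => simp
  | tmul f g => rw [muls2_tmul, ttMul_form, ttMul_form, Vm_assoc R m hR]
  | add x y hx hy => simp only [tmul_add, add_tmul, map_add, hx, hy]

lemma ttMul_unitl (hR : IsTwisting k R m e) (hm_l : forall b : B, m (e ⊗ₜ b) = b)
    (a : A) (z : A ⊗[k] B) :
    ttMul k R m ((a ⊗ₜ e) ⊗ₜ z) = muls2 k A B (a ⊗ₜ z) := by
  induction z using TensorProduct.induction_on with
  | zero => simp
  | tmul c d => rw [ttMul_tmul, hR.unit_left, Nm_tmul, hm_l]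
  | add x y hx hy => simp only [tmul_add, add_tmul, map_add, hx, hy]

lemma ttMul_one_one (hR : IsTwisting k R m e) (b b' : B) :
    ttMul k R m (((1:A) ⊗ₜ b) ⊗ₜ ((1:A) ⊗ₜ b')) = (1:A) ⊗ₜ m (b ⊗ₜ b') := by
  rw [ttMul_tmul, hR.unit_right, Nm_tmul, muls2_one]

lemma ttMul_ae (hm_r : forall b : B, m (b ⊗ₜ e) = b) (z : A ⊗[k] B) (a : A) :
    ttMul k R m (z ⊗ₜ (a ⊗ₜ e)) = Vm R (z ⊗ₜ a) := by
  rw [ttMul_form, Nm_e m e hm_r]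

lemma ttMul_oneb_ae (hm_r : forall b : B, m (b ⊗ₜ e) = b) (b : B) (a : A) :
    ttMul k R m (((1:A) ⊗ₜ b) ⊗ₜ (a ⊗ₜ e)) = R (b ⊗ₜ a) := by
  rw [ttMul_ae R m hm_r, Vm_one]

lemma Rtw_aux (θ γ : B →ₗ[k] A ⊗[k] B) (u : A ⊗[k] B) (a : A) :
    muls3 k A B (lTensor A (lTensor A γ)
        (lTensor A R ((TensorProduct.assoc k A B A) (u ⊗ₜ a))))
      = Φ γ (Vm R (u ⊗ₜ a)) := by
  induction u using TensorProduct.induction_on with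
  | zero => simp
  | tmul c d =>
      rw [Vm_tmul, Φ_lsmul]
      simp only [TensorProduct.assoc_tmul, lTensor_tmul]
      simp [muls3, Φ]
  | add x y hx hy => simp only [tmul_add, add_tmul, map_add, hx, hy]

lemma Rtw_point (θ γ : B →ₗ[k] A ⊗[k] B) (b : B) (a : A) :
    Rtw k R θ γ (b ⊗ₜ a) = Φ γ (Vm R (θ b ⊗ₜ a)) := by
  have h := Rtw_aux R θ γ (θ b) a
  simp only [Rtw, coe_comp, Function.comp_apply, rTensor_tmul, LinearEquiv.coe_coe]
  exact h

lemma Kprime (m' : B ⊗[k] B →ₗ[k] B) (θ : B →ₗ[k] A ⊗[k] B)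
    (hθ : forall b b' : B, θ (m' (b ⊗ₜ b')) = ttMul k R m (θ b ⊗ₜ θ b'))
    (w : A ⊗[k] B) (b' : B) :
    Φ θ (Nm m' (w ⊗ₜ b')) = ttMul k R m (Φ θ w ⊗ₜ θ b') := by
  induction w using TensorProduct.induction_on with
  | zero => simp
  | tmul c d => rw [Nm_tmul, Φ_tmul, Φ_tmul, hθ, ttMul_lsmul]
  | add x y hx hy => simp only [tmul_add, add_tmul, map_add, hx, hy]

end TLemmas


section Directions

variable (R R' : B ⊗[k] A →ₗ[k] A ⊗[k] B) (m m' : B ⊗[k] B →ₗ[k] B)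

lemma Φ_inv (θ γ : B →ₗ[k] A ⊗[k] B)
    (h : muls2 k A B ∘ₗ lTensor A γ ∘ₗ θ = TensorProduct.mk k A B 1) :
    ∀ z : A ⊗[k] B, Φ γ (Φ θ z) = z := by
  intro z
  induction z using TensorProduct.induction_on with
  | zero => simp
  | tmul a b =>
      rw [Φ_tmul, Φ_lsmul]
      have hb : Φ γ (θ b) = (1 : A) ⊗ₜ b := by
        have h2 := LinearMap.congr_fun h b
        simpa [Φ] using h2
      rw [hb, muls2_tmul, mul_one]
  | add x y hx hy => simp only [map_add, hx, hy]

/-- Backward direction: from `(θ, γ)` construct the `A`-equivalence. -/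
lemma backward {e : B} (hR : IsTwisting k R m e)
    (θ γ : B →ₗ[k] A ⊗[k] B)
    (hθm : ∀ b b' : B, θ (m' (b ⊗ₜ b')) = ttMul k R m (θ b ⊗ₜ θ b'))
    (hθe : θ e = (1 : A) ⊗ₜ e)
    (hc2 : muls2 k A B ∘ₗ lTensor A γ ∘ₗ θ = TensorProduct.mk k A B 1)
    (hc3 : muls2 k A B ∘ₗ lTensor A θ ∘ₗ γ = TensorProduct.mk k A B 1)
    (hR' : R' = Rtw k R θ γ) :
    ∃ φ : (A ⊗[k] B) ≃ₗ[k] A ⊗[k] B,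
      (∀ x y : A ⊗[k] B, φ (ttMul k R' m' (x ⊗ₜ y)) = ttMul k R m (φ x ⊗ₜ φ y)) ∧
      (∀ a : A, φ (a ⊗ₜ e) = a ⊗ₜ e) := by
  refine ⟨LinearEquiv.ofLinear (Φ θ) (Φ γ)
      (LinearMap.ext fun z => Φ_inv γ θ hc3 z)
      (LinearMap.ext fun z => Φ_inv θ γ hc2 z), ?_, ?_⟩
  · intro x y
    simp only [LinearEquiv.ofLinear_apply]
    induction x using TensorProduct.induction_on with
    | zero => simp
    | tmul a b =>
        induction y using TensorProduct.induction_on with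
        | zero => simp
        | tmul a' b' =>
            have hRb : Φ θ (R' (b ⊗ₜ a')) = Vm R (θ b ⊗ₜ a') := by
              rw [hR', Rtw_point, Φ_inv γ θ hc3]
            rw [ttMul_tmul, Φ_lsmul, Kprime R m m' θ hθm, hRb,
              Φ_tmul, Φ_tmul, ttMul_lsmul, ttMul_mulsA R m hR]
        | add u v hu hv => simp only [tmul_add, add_tmul, map_add, hu, hv]
    | add u v hu hv => simp only [tmul_add, add_tmul, map_add, hu, hv]
  · intro a
    simp only [LinearEquiv.ofLinear_apply]
    rw [Φ_tmul, hθe, muls2_tmul, mul_one]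

end Directions


section Forward

variable (R R' : B ⊗[k] A →ₗ[k] A ⊗[k] B) (m m' : B ⊗[k] B →ₗ[k] B)

lemma chain_sub (w : A ⊗[k] B) (x : A) (g : B) :
    TensorProduct.map (mul' k A) m'
      ((TensorProduct.assoc k (A ⊗[k] A) B B)
        (rTensor B (TensorProduct.assoc k A A B).symm.toLinearMap ((x ⊗ₜ w) ⊗ₜ g)))
      = Nm m' (muls2 k A B (x ⊗ₜ w) ⊗ₜ g) := by
  induction w using TensorProduct.induction_on with
  | zero => simp
  | tmul c y => simp [Nm_tmul, muls2_tmul, mul'_apply]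
  | add u v hu hv => simp only [tmul_add, add_tmul, map_add, hu, hv]

lemma chain1 (γ : B →ₗ[k] A ⊗[k] B) (u : A ⊗[k] B) (g : B) :
    TensorProduct.map (mul' k A) m'
      ((TensorProduct.assoc k (A ⊗[k] A) B B)
        (rTensor B (TensorProduct.assoc k A A B).symm.toLinearMap
          (rTensor B (lTensor A γ) (u ⊗ₜ g))))
      = Nm m' (Φ γ u ⊗ₜ g) := by
  induction u using TensorProduct.induction_on with
  | zero => simp
  | tmul x y => rw [rTensor_tmul, lTensor_tmul, chain_sub, Φ_tmul]
  | add u v hu hv => simp only [tmul_add, add_tmul, map_add, hu, hv]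

lemma bigpoint (γ : B →ₗ[k] A ⊗[k] B)
    (hVγ : ∀ (b : B) (f : A), Vm R' (γ b ⊗ₜ f) = Φ γ (R (b ⊗ₜ f)))
    (b : B) (z : A ⊗[k] B) :
    TensorProduct.map (mul' k A) m'
      ((TensorProduct.assoc k (A ⊗[k] A) B B)
        (rTensor B (TensorProduct.assoc k A A B).symm.toLinearMap
          (rTensor B (lTensor A γ)
            (rTensor B R ((TensorProduct.assoc k B A B).symm.toLinearMap (b ⊗ₜ z))))))
      = ttMul k R' m' (γ b ⊗ₜ z) := by
  induction z using TensorProduct.induction_on with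
  | zero => simp
  | tmul f g =>
      have h1 : (TensorProduct.assoc k B A B).symm.toLinearMap (b ⊗ₜ (f ⊗ₜ g))
          = (b ⊗ₜ f) ⊗ₜ g := rfl
      rw [h1, rTensor_tmul, chain1, ttMul_form, hVγ]
  | add u v hu hv => simp only [tmul_add, add_tmul, map_add, hu, hv]

/-- Forward direction: from the `A`-equivalence construct `(θ, γ)`. -/
lemma forward {e : B} (hR : IsTwisting k R m e) (hR' : IsTwisting k R' m' e)
    (hm_l : ∀ b : B, m (e ⊗ₜ b) = b) (hm_r : ∀ b : B, m (b ⊗ₜ e) = b)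
    (hm'_l : ∀ b : B, m' (e ⊗ₜ b) = b) (hm'_r : ∀ b : B, m' (b ⊗ₜ e) = b)
    (φ : (A ⊗[k] B) ≃ₗ[k] A ⊗[k] B)
    (hmul : ∀ x y : A ⊗[k] B, φ (ttMul k R' m' (x ⊗ₜ y)) = ttMul k R m (φ x ⊗ₜ φ y))
    (hunit : ∀ a : A, φ (a ⊗ₜ e) = a ⊗ₜ e) :
    (∃ θ γ : B →ₗ[k] A ⊗[k] B,
      (∀ b b' : B, θ (m' (b ⊗ₜ b')) = ttMul k R m (θ b ⊗ₜ θ b')) ∧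
      θ e = (1 : A) ⊗ₜ e ∧
      γ e = (1 : A) ⊗ₜ e ∧
      (γ ∘ₗ m = TensorProduct.map (mul' k A) m'
          ∘ₗ (TensorProduct.assoc k (A ⊗[k] A) B B).toLinearMap
          ∘ₗ rTensor B (TensorProduct.assoc k A A B).symm.toLinearMap
          ∘ₗ rTensor B (lTensor A γ) ∘ₗ rTensor B R
          ∘ₗ (TensorProduct.assoc k B A B).symm.toLinearMap ∘ₗ lTensor B γ) ∧
      (muls2 k A B ∘ₗ lTensor A γ ∘ₗ θ = TensorProduct.mk k A B 1) ∧
      (muls2 k A B ∘ₗ lTensor A θ ∘ₗ γ = TensorProduct.mk k A B 1) ∧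
      R' = Rtw k R θ γ) := by
  have hsmul : ∀ x y : A ⊗[k] B,
      φ.symm (ttMul k R m (x ⊗ₜ y)) = ttMul k R' m' (φ.symm x ⊗ₜ φ.symm y) := by
    intro x y
    apply φ.injective
    rw [hmul, φ.apply_symm_apply, φ.apply_symm_apply, φ.apply_symm_apply]
  have hsunit : ∀ a : A, φ.symm (a ⊗ₜ e) = a ⊗ₜ e := by
    intro a; apply φ.injective; rw [φ.apply_symm_apply, hunit]
  have hAlin : ∀ (a : A) (z : A ⊗[k] B),
      φ (muls2 k A B (a ⊗ₜ z)) = muls2 k A B (a ⊗ₜ φ z) := by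
    intro a z
    rw [← ttMul_unitl R' m' hR' hm'_l a z, hmul, hunit, ttMul_unitl R m hR hm_l]
  have hAlins : ∀ (a : A) (z : A ⊗[k] B),
      φ.symm (muls2 k A B (a ⊗ₜ z)) = muls2 k A B (a ⊗ₜ φ.symm z) := by
    intro a z
    rw [← ttMul_unitl R m hR hm_l a z, hsmul, hsunit, ttMul_unitl R' m' hR' hm'_l]
  set θ : B →ₗ[k] A ⊗[k] B := φ.toLinearMap ∘ₗ TensorProduct.mk k A B 1 with hθdef
  set γ : B →ₗ[k] A ⊗[k] B :=
    (φ.symm : A ⊗[k] B →ₗ[k] A ⊗[k] B) ∘ₗ TensorProduct.mk k A B 1 with hγdef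
  have hθap : ∀ b : B, θ b = φ ((1 : A) ⊗ₜ b) := fun b => rfl
  have hγap : ∀ b : B, γ b = φ.symm ((1 : A) ⊗ₜ b) := fun b => rfl
  have hφall : ∀ z : A ⊗[k] B, φ z = Φ θ z := by
    intro z
    induction z using TensorProduct.induction_on with
    | zero => simp
    | tmul a b =>
        have h1 : (a : A) ⊗ₜ[k] b = muls2 k A B (a ⊗ₜ ((1 : A) ⊗ₜ b)) := by
          rw [muls2_tmul, mul_one]
        rw [Φ_tmul, h1, hAlin, hθap]
    | add x y hx hy => simp only [map_add, hx, hy]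
  have hφsall : ∀ z : A ⊗[k] B, φ.symm z = Φ γ z := by
    intro z
    induction z using TensorProduct.induction_on with
    | zero => simp
    | tmul a b =>
        have h1 : (a : A) ⊗ₜ[k] b = muls2 k A B (a ⊗ₜ ((1 : A) ⊗ₜ b)) := by
          rw [muls2_tmul, mul_one]
        rw [Φ_tmul, h1, hAlins, hγap]
    | add x y hx hy => simp only [map_add, hx, hy]
  have hθm : ∀ b b' : B, θ (m' (b ⊗ₜ b')) = ttMul k R m (θ b ⊗ₜ θ b') := by
    intro b b'
    rw [hθap, hθap, hθap, ← ttMul_one_one R' m' hR', hmul]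
  have hR'point : ∀ (d : B) (f : A), R' (d ⊗ₜ f) = Φ γ (Vm R (θ d ⊗ₜ f)) := by
    intro d f
    have h1 : φ (R' (d ⊗ₜ f)) = Vm R (θ d ⊗ₜ f) := by
      rw [← ttMul_oneb_ae R' m' hm'_r d f, hmul, hunit, ← hθap, ttMul_ae R m hm_r]
    calc R' (d ⊗ₜ f) = φ.symm (φ (R' (d ⊗ₜ f))) := (φ.symm_apply_apply _).symm
      _ = φ.symm (Vm R (θ d ⊗ₜ f)) := by rw [h1]
      _ = Φ γ (Vm R (θ d ⊗ₜ f)) := hφsall _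
  have hV'point : ∀ (z : A ⊗[k] B) (f : A),
      Vm R' (z ⊗ₜ f) = Φ γ (Vm R (Φ θ z ⊗ₜ f)) := by
    intro z f
    induction z using TensorProduct.induction_on with
    | zero => simp
    | tmul c d => rw [Vm_tmul, hR'point, ← Φ_lsmul, ← Vm_lsmul, Φ_tmul]
    | add x y hx hy => simp only [tmul_add, add_tmul, map_add, hx, hy]
  have hVγ : ∀ (b : B) (f : A), Vm R' (γ b ⊗ₜ f) = Φ γ (R (b ⊗ₜ f)) := by
    intro b f
    rw [hV'point, ← hφall, hγap, φ.apply_symm_apply, Vm_one]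
  refine ⟨θ, γ, hθm, ?_, ?_, ?_, ?_, ?_, ?_⟩
  · rw [hθap]; exact hunit 1
  · rw [hγap]; exact hsunit 1
  · apply TensorProduct.ext'
    intro b b'
    have hrhs := bigpoint R R' m' γ hVγ b (γ b')
    simp only [coe_comp, Function.comp_apply, lTensor_tmul, LinearEquiv.coe_coe] at hrhs ⊢
    rw [hrhs]
    have hlhs : ttMul k R' m' (γ b ⊗ₜ γ b') = γ (m (b ⊗ₜ b')) := by
      rw [hγap b, hγap b', ← hsmul, ttMul_one_one R m hR, ← hγap]
    rw [hlhs]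
  · apply LinearMap.ext
    intro b
    have h1 : Φ γ (θ b) = (1 : A) ⊗ₜ b := by
      rw [← hφsall, hθap, φ.symm_apply_apply]
    simpa [Φ] using h1
  · apply LinearMap.ext
    intro b
    have h1 : Φ θ (γ b) = (1 : A) ⊗ₜ b := by
      rw [← hφall, hγap, φ.apply_symm_apply]
    simpa [Φ] using h1
  · apply TensorProduct.ext'
    intro b a
    rw [Rtw_point, hR'point]

end Forward

end Stmt13Aux

/-- characterization of `A`-equivalence of twisted tensor products
`A ⊗_R B` and `A ⊗_{R'} B'` for two algebra structures `m`, `m'` on `B` with common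
unit `e`. -/
theorem statement13 {k A B : Type u} [Field k] [Ring A] [Algebra k A]
    [AddCommGroup B] [Module k B] (e : B) (m m' : B ⊗[k] B →ₗ[k] B)
    (hm_assoc : m ∘ₗ rTensor B m
      = m ∘ₗ lTensor B m ∘ₗ (TensorProduct.assoc k B B B).toLinearMap)
    (hm_l : ∀ b : B, m (e ⊗ₜ b) = b) (hm_r : ∀ b : B, m (b ⊗ₜ e) = b)
    (hm'_assoc : m' ∘ₗ rTensor B m'
      = m' ∘ₗ lTensor B m' ∘ₗ (TensorProduct.assoc k B B B).toLinearMap)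
    (hm'_l : ∀ b : B, m' (e ⊗ₜ b) = b) (hm'_r : ∀ b : B, m' (b ⊗ₜ e) = b)
    (R R' : B ⊗[k] A →ₗ[k] A ⊗[k] B)
    (hR : IsTwisting k R m e) (hR' : IsTwisting k R' m' e) :
    (∃ φ : (A ⊗[k] B) ≃ₗ[k] A ⊗[k] B,
      (∀ x y : A ⊗[k] B, φ (ttMul k R' m' (x ⊗ₜ y)) = ttMul k R m (φ x ⊗ₜ φ y)) ∧
      (∀ a : A, φ (a ⊗ₜ e) = a ⊗ₜ e)) ↔
    (∃ θ γ : B →ₗ[k] A ⊗[k] B,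
      (∀ b b' : B, θ (m' (b ⊗ₜ b')) = ttMul k R m (θ b ⊗ₜ θ b')) ∧
      θ e = (1 : A) ⊗ₜ e ∧
      γ e = (1 : A) ⊗ₜ e ∧
      (γ ∘ₗ m = TensorProduct.map (mul' k A) m'
          ∘ₗ (TensorProduct.assoc k (A ⊗[k] A) B B).toLinearMap
          ∘ₗ rTensor B (TensorProduct.assoc k A A B).symm.toLinearMap
          ∘ₗ rTensor B (lTensor A γ) ∘ₗ rTensor B R
          ∘ₗ (TensorProduct.assoc k B A B).symm.toLinearMap ∘ₗ lTensor B γ) ∧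
      (muls2 k A B ∘ₗ lTensor A γ ∘ₗ θ = TensorProduct.mk k A B 1) ∧
      (muls2 k A B ∘ₗ lTensor A θ ∘ₗ γ = TensorProduct.mk k A B 1) ∧
      R' = Rtw k R θ γ) := by
  constructor
  · rintro ⟨φ, hmul, hunit⟩
    exact Stmt13Aux.forward R R' m m' hR hR' hm_l hm_r hm'_l hm'_r φ hmul hunit
  · rintro ⟨θ, γ, hθm, hθe, hγe, _hc4, hc2, hc3, hR'⟩
    exact Stmt13Aux.backward R R' m m' hR θ γ hθm hθe hc2 hc3 hR'
end
end

section
/- In the setting of the previous construction, the comultiplication Δ' of the crossed coproduct A_{W',ρ'}⊗C (given by Δ' = (id_A⊗W'⊗id_C)∘(ρ'⊗Δ_C)∘(id_A⊗Δ_C)) is given explicitly by Δ'(a⊗c) = (a₁ c₁_{<-1>₁} c₁_{<0>_{\{-1\}}} ⊗ c₁_{<0>_{\{0\}}}) ⊗ (a₂ c₁_{<-1>₂} c₂_{\{-1\}} ⊗ c₂_{\{0\}}); equivalently, Δ' = (φ⁻¹ ⊗ φ⁻¹)∘Δ∘φ, where Δ(a⊗c) = (a₁⊗c₁)⊗(a₂⊗c₂)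 is the tensor product comultiplication and φ(a⊗c) = a c_{<-1>} ⊗ c_{<0>}, φ⁻¹(a⊗c) = a c_{\{-1\}} ⊗ c_{\{0\}}. -/
open TensorProduct LinearMap Coalgebra

noncomputable section

universe u
open Paper


namespace St15
open TensorProduct LinearMap Coalgebra

variable {k A C : Type u} [Field k] [Ring A] [Bialgebra k A]
  [AddCommGroup C] [Module k C] [Coalgebra k C]

/-- helper: `(g ⊗ id) ∘ Δ = γ` for `g = g0 ∘ γ`, from the comodule condition. -/
lemma derA (γ : C →ₗ[k] A ⊗[k] C) (hγ : ComodCond k γ) :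
    rTensor C (g0 k A C ∘ₗ γ) ∘ₗ (comul : C →ₗ[k] C ⊗[k] C) = γ := by
  have h1 : rTensor C γ ∘ₗ (comul : C →ₗ[k] C ⊗[k] C)
      = (TensorProduct.assoc k A C C).symm.toLinearMap ∘ₗ lTensor A comul ∘ₗ γ := by
    rw [ComodCond] at hγ
    rw [hγ]
    ext a c
    simp
  have h2 : (rTensor C (g0 k A C)) ∘ₗ (TensorProduct.assoc k A C C).symm.toLinearMap
      = lTensor A ((TensorProduct.lid k C).toLinearMap ∘ₗ rTensor C (counit : C →ₗ[k] k)) := by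
    ext a c c'
    simp [g0, smul_tmul]
  calc rTensor C (g0 k A C ∘ₗ γ) ∘ₗ (comul : C →ₗ[k] C ⊗[k] C)
      = rTensor C (g0 k A C) ∘ₗ (rTensor C γ ∘ₗ comul) := by
        rw [← comp_assoc, ← rTensor_comp]
    _ = (rTensor C (g0 k A C) ∘ₗ (TensorProduct.assoc k A C C).symm.toLinearMap)
        ∘ₗ lTensor A comul ∘ₗ γ := by rw [h1]; rw [comp_assoc]
    _ = lTensor A ((TensorProduct.lid k C).toLinearMap ∘ₗ rTensor C (counit : C →ₗ[k] k))
        ∘ₗ lTensor A (comul : C →ₗ[k] C ⊗[k] C) ∘ₗ γ := by rw [h2]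
    _ = γ := by
        rw [← comp_assoc, ← lTensor_comp, comp_assoc, Coalgebra.rTensor_counit_comp_comul]
        have h3 : (TensorProduct.lid k C).toLinearMap ∘ₗ (TensorProduct.mk k k C) 1
            = (LinearMap.id : C →ₗ[k] C) := by ext c; simp
        rw [h3, lTensor_id, id_comp]

/-- comodule condition, rearranged. -/
lemma comod_symm (γ : C →ₗ[k] A ⊗[k] C) (hγ : ComodCond k γ) :
    rTensor C γ ∘ₗ (comul : C →ₗ[k] C ⊗[k] C)
      = (TensorProduct.assoc k A C C).symm.toLinearMap ∘ₗ lTensor A comul ∘ₗ γ := by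
  rw [ComodCond] at hγ
  rw [hγ]; ext a c; simp

variable (θ γ : C →ₗ[k] A ⊗[k] C)

/-- `((α₁⊗α₂)⊗((p⊗q)⊗r)) ↦ (α₁p⊗q)⊗(α₂r)` -/
noncomputable def auxXi : (A ⊗[k] A) ⊗[k] ((A ⊗[k] C) ⊗[k] A) →ₗ[k] (A ⊗[k] C) ⊗[k] A :=
  TensorProduct.map (muls2 k A C) (mul' k A)
    ∘ₗ (tensorTensorTensorComm k A A (A ⊗[k] C) A).toLinearMap

/-- `((p⊗q)⊗(r⊗s)) ↦ (p⊗s)⊗(g(q)r)` -/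
noncomputable def auxQ : (A ⊗[k] C) ⊗[k] (A ⊗[k] C) →ₗ[k] (A ⊗[k] C) ⊗[k] A :=
  lTensor (A ⊗[k] C) (mul' k A)
    ∘ₗ (tensorTensorTensorComm k A A C A).toLinearMap
    ∘ₗ TensorProduct.map (lTensor A (g0 k A C ∘ₗ γ)) (TensorProduct.comm k A C).toLinearMap

noncomputable def auxNE : C →ₗ[k] (A ⊗[k] C) ⊗[k] A :=
  (TensorProduct.mk k (A ⊗[k] C) A).flip 1 ∘ₗ γ

noncomputable def auxNG : C →ₗ[k] (A ⊗[k] C) ⊗[k] A :=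
  auxQ γ ∘ₗ TensorProduct.map γ θ ∘ₗ (comul : C →ₗ[k] C ⊗[k] C)

end St15


namespace St15
open TensorProduct LinearMap Coalgebra

variable {k A C : Type u} [Field k] [Ring A] [Bialgebra k A]
  [AddCommGroup C] [Module k C] [Coalgebra k C]
variable (θ γ : C →ₗ[k] A ⊗[k] C)

lemma St1 : auxQ γ ∘ₗ lTensor (A ⊗[k] C) θ
      ∘ₗ (TensorProduct.assoc k A C C).symm.toLinearMap ∘ₗ lTensor A comul
    = (TensorProduct.assoc k A C A).symm.toLinearMap
      ∘ₗ lTensor A ((TensorProduct.comm k A C).toLinearMap ∘ₗ muls2 k A C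
          ∘ₗ lTensor A θ ∘ₗ (rTensor C (g0 k A C ∘ₗ γ) ∘ₗ comul)) := by
  apply TensorProduct.ext'
  intro a w
  simp only [comp_apply, lTensor_tmul, LinearEquiv.coe_coe]
  generalize (comul w : C ⊗[k] C) = u
  induction u using TensorProduct.induction_on with
  | zero => simp
  | add x y hx hy => simp only [tmul_add, map_add, hx, hy]
  | tmul u₁ u₂ =>
    simp only [LinearEquiv.coe_coe, TensorProduct.assoc_symm_tmul, lTensor_tmul, rTensor_tmul,
      comp_apply]
    generalize θ u₂ = v
    induction v using TensorProduct.induction_on with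
    | zero => simp
    | add x y hx hy => simp only [tmul_add, map_add, hx, hy]
    | tmul v₁ v₂ =>
      simp [auxQ, muls2, mul'_apply]

end St15

namespace St15
open TensorProduct LinearMap Coalgebra

variable {k A C : Type u} [Field k] [Ring A] [Bialgebra k A]
  [AddCommGroup C] [Module k C] [Coalgebra k C]
variable (θ γ : C →ₗ[k] A ⊗[k] C)

lemma crux3 (hγ : ComodCond k γ)
    (h3b : muls2 k A C ∘ₗ lTensor A θ ∘ₗ γ = TensorProduct.mk k A C 1) :
    auxNG θ γ = auxNE γ := by
  have hmap : TensorProduct.map γ θ = lTensor (A ⊗[k] C) θ ∘ₗ rTensor C γ :=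
    (lTensor_comp_rTensor _ _ _).symm
  have h := congrArg (fun f => f ∘ₗ γ) (St1 θ γ)
  rw [auxNG, hmap]
  simp only [comp_assoc] at h ⊢
  rw [comod_symm γ hγ, h, derA γ hγ, h3b]
  have fin : (TensorProduct.assoc k A C A).symm.toLinearMap
      ∘ₗ lTensor A ((TensorProduct.comm k A C).toLinearMap ∘ₗ TensorProduct.mk k A C 1)
      = (TensorProduct.mk k (A ⊗[k] C) A).flip 1 := by
    ext a c; simp
  rw [auxNE, ← fin]
  simp only [comp_assoc]

end St15

namespace St15
open TensorProduct LinearMap Coalgebra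

variable {k A C : Type u} [Field k] [Ring A] [Bialgebra k A]
  [AddCommGroup C] [Module k C] [Coalgebra k C]
variable (θ γ : C →ₗ[k] A ⊗[k] C)

lemma S1' : eAux k θ γ = auxXi ∘ₗ TensorProduct.map comul (auxNE γ) ∘ₗ θ := by
  apply LinearMap.ext; intro c
  simp only [eAux, comp_apply]
  generalize θ c = w
  induction w using TensorProduct.induction_on with
  | zero => simp
  | add x y hx hy => simp only [map_add, hx, hy]
  | tmul a z =>
    simp only [TensorProduct.map_tmul, comp_apply, auxNE, flip_apply, TensorProduct.mk_apply,
      id_coe, id_eq]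
    generalize (Coalgebra.comul (R := k) a : A ⊗[k] A) = α
    generalize γ z = v
    induction α using TensorProduct.induction_on with
    | zero => simp
    | add x y hx hy => simp only [add_tmul, tmul_add, map_add, hx, hy]
    | tmul a₁ a₂ =>
      induction v using TensorProduct.induction_on with
      | zero => simp
      | add x y hx hy => simp only [add_tmul, tmul_add, map_add, hx, hy]
      | tmul p q =>
        simp [auxXi, muls2, mul'_apply, mul_one]

/-- the `F` functional of the chain: `N`-processing on the first leg, tail `T`. -/
noncomputable def auxFF (N : C →ₗ[k] (A ⊗[k] C) ⊗[k] A) (T : C →ₗ[k] A ⊗[k] C) :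
    C →ₗ[k] (A ⊗[k] C) ⊗[k] (A ⊗[k] C) :=
  lTensor (A ⊗[k] C) (muls2 k A C)
    ∘ₗ (TensorProduct.assoc k (A ⊗[k] C) A (A ⊗[k] C)).toLinearMap
    ∘ₗ TensorProduct.map (auxXi ∘ₗ TensorProduct.map comul N ∘ₗ θ) T
    ∘ₗ (comul : C →ₗ[k] C ⊗[k] C)

lemma S1 : dAux k θ γ = auxFF θ (auxNE γ) γ := by
  rw [dAux, auxFF, ← S1']

end St15

namespace St15
open TensorProduct LinearMap Coalgebra

variable {k A C : Type u} [Field k] [Ring A] [Bialgebra k A]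
  [AddCommGroup C] [Module k C] [Coalgebra k C]
variable (θ γ : C →ₗ[k] A ⊗[k] C)

noncomputable def auxT0 : C →ₗ[k] A ⊗[k] C :=
  rTensor C (g0 k A C ∘ₗ γ) ∘ₗ (comul : C →ₗ[k] C ⊗[k] C)

noncomputable def auxP1 : C →ₗ[k] (A ⊗[k] A) ⊗[k] (A ⊗[k] A) :=
  TensorProduct.map (Coalgebra.comul (R := k) (A := A)) (lamAux k γ) ∘ₗ θ

noncomputable def auxP2 : C →ₗ[k] (A ⊗[k] C) ⊗[k] (A ⊗[k] C) :=
  TensorProduct.map θ (auxT0 γ) ∘ₗ (comul : C →ₗ[k] C ⊗[k] C)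

noncomputable def auxK2 : (A ⊗[k] C) ⊗[k] (A ⊗[k] C) →ₗ[k] C ⊗[k] (A ⊗[k] C) :=
  lTensor C (muls2 k A C) ∘ₗ (TensorProduct.assoc k C A (A ⊗[k] C)).toLinearMap
    ∘ₗ rTensor (A ⊗[k] C) (TensorProduct.comm k A C).toLinearMap

noncomputable def auxAsm1 :
    ((A ⊗[k] A) ⊗[k] (A ⊗[k] A)) ⊗[k] ((A ⊗[k] C) ⊗[k] (A ⊗[k] C))
      →ₗ[k] (A ⊗[k] C) ⊗[k] (A ⊗[k] C) :=
  lTensor (A ⊗[k] C) (muls2 k A C)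
    ∘ₗ (tensorTensorTensorComm k A A C (A ⊗[k] C)).toLinearMap
    ∘ₗ TensorProduct.map (mulPair k) auxK2

noncomputable def auxG1 : C →ₗ[k] (A ⊗[k] C) ⊗[k] (A ⊗[k] C) :=
  auxAsm1 ∘ₗ TensorProduct.map (auxP1 θ γ) (auxP2 θ γ) ∘ₗ (comul : C →ₗ[k] C ⊗[k] C)

noncomputable def auxX' : C ⊗[k] C →ₗ[k] (A ⊗[k] C) ⊗[k] A :=
  auxXi ∘ₗ TensorProduct.map (Coalgebra.comul (R := k) (A := A)) (auxQ γ)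
    ∘ₗ lTensor A (TensorProduct.map γ θ)
    ∘ₗ (TensorProduct.assoc k A C C).toLinearMap ∘ₗ rTensor C θ

set_option maxHeartbeats 1000000 in
set_option synthInstance.maxHeartbeats 400000 in
lemma St3 (T : C →ₗ[k] A ⊗[k] C) :
    lTensor (A ⊗[k] C) (muls2 k A C)
      ∘ₗ (TensorProduct.assoc k (A ⊗[k] C) A (A ⊗[k] C)).toLinearMap
      ∘ₗ TensorProduct.map (auxX' θ γ) T
      ∘ₗ (TensorProduct.assoc k C C C).symm.toLinearMap
    = auxAsm1 ∘ₗ TensorProduct.map (auxP1 θ γ) (TensorProduct.map θ T) := by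
  apply TensorProduct.ext'
  intro c₁ w
  induction w using TensorProduct.induction_on with
  | zero => simp only [tmul_zero, map_zero]
  | add x y hx hy => simp only [tmul_add, map_add, hx, hy]
  | tmul c₂ c₃ =>
    simp only [comp_apply, LinearEquiv.coe_coe, TensorProduct.assoc_symm_tmul,
      TensorProduct.map_tmul, auxX', auxP1, rTensor_tmul, TensorProduct.assoc_tmul]
    generalize θ c₁ = w₁
    induction w₁ using TensorProduct.induction_on with
    | zero => simp only [zero_tmul, tmul_zero, map_zero]
    | add x y hx hy => simp only [tmul_add, add_tmul, map_add, hx, hy]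
    | tmul a z =>
      simp only [lTensor_tmul, TensorProduct.assoc_tmul, TensorProduct.map_tmul,
        lamAux, comp_apply]
      generalize (Coalgebra.comul (R := k) a : A ⊗[k] A) = α
      generalize γ z = v
      generalize θ c₂ = u
      generalize T c₃ = s
      induction α using TensorProduct.induction_on with
      | zero => simp only [zero_tmul, tmul_zero, map_zero]
      | add x y hx hy => simp only [tmul_add, add_tmul, map_add, hx, hy]
      | tmul a₁ a₂ =>
        induction v using TensorProduct.induction_on with
        | zero => simp only [zero_tmul, tmul_zero, map_zero]
        | add x y hx hy => simp only [tmul_add, add_tmul, map_add, hx, hy]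
        | tmul v₁ v₂ =>
          induction u using TensorProduct.induction_on with
          | zero => simp only [zero_tmul, tmul_zero, map_zero]
          | add x y hx hy => simp only [tmul_add, add_tmul, map_add, hx, hy]
          | tmul u₁ u₂ =>
            induction s using TensorProduct.induction_on with
            | zero => simp only [zero_tmul, tmul_zero, map_zero]
            | add x y hx hy => simp only [tmul_add, add_tmul, map_add, hx, hy]
            | tmul s₁ s₂ =>
              simp only [auxQ, auxAsm1, auxK2, mulPair, auxXi, muls2, g0, comp_apply,
                TensorProduct.map_tmul, lTensor_tmul, rTensor_tmul, LinearEquiv.coe_coe,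
                TensorProduct.assoc_tmul, TensorProduct.assoc_symm_tmul,
                TensorProduct.comm_tmul, tensorTensorTensorComm_tmul, mul'_apply,
                LinearMap.id_coe, id_eq, mul_assoc]

end St15

namespace St15
open TensorProduct LinearMap Coalgebra

variable {k A C : Type u} [Field k] [Ring A] [Bialgebra k A]
  [AddCommGroup C] [Module k C] [Coalgebra k C]
variable (θ γ : C →ₗ[k] A ⊗[k] C)

lemma S3 (hθ : ComodCond k θ) : auxFF θ (auxNG θ γ) (auxT0 γ) = auxG1 θ γ := by
  have leg : auxXi ∘ₗ TensorProduct.map (Coalgebra.comul (R := k) (A := A)) (auxNG θ γ) ∘ₗ θ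
      = auxX' θ γ ∘ₗ (comul : C →ₗ[k] C ⊗[k] C) := by
    rw [ComodCond] at hθ
    rw [auxNG, ← map_comp_lTensor, lTensor_comp]
    simp only [comp_assoc]
    rw [hθ, auxX']
    simp only [comp_assoc]
  have h := congrArg (fun f => f ∘ₗ (lTensor C (comul : C →ₗ[k] C ⊗[k] C)
      ∘ₗ (comul : C →ₗ[k] C ⊗[k] C))) (St3 θ γ (auxT0 γ))
  rw [auxFF, leg, ← map_comp_rTensor]
  rw [auxG1, auxP2, ← map_comp_lTensor]
  simp only [comp_assoc] at h ⊢
  rw [← Coalgebra.coassoc_symm, h]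

end St15

namespace St15
open TensorProduct LinearMap Coalgebra

variable {k A C : Type u} [Field k] [Ring A] [Bialgebra k A]
  [AddCommGroup C] [Module k C] [Coalgebra k C]
variable (θ γ : C →ₗ[k] A ⊗[k] C)

/-- the core of `W'` applied to a split pair. -/
noncomputable def auxWc' : C ⊗[k] C →ₗ[k] C ⊗[k] A :=
  lTensor C (mul' k A) ∘ₗ (TensorProduct.assoc k C A A).toLinearMap
    ∘ₗ rTensor A (TensorProduct.comm k A C).toLinearMap
    ∘ₗ (TensorProduct.assoc k A C A).symm.toLinearMap
    ∘ₗ lTensor A (lTensor C (g0 k A C ∘ₗ γ))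
    ∘ₗ (TensorProduct.assoc k A C C).toLinearMap ∘ₗ rTensor C θ

/-- the core of `W'` as a map on `C`. -/
noncomputable def auxWcore : C →ₗ[k] C ⊗[k] A :=
  lTensor C (mul' k A) ∘ₗ (TensorProduct.assoc k C A A).toLinearMap
    ∘ₗ rTensor A (TensorProduct.comm k A C).toLinearMap
    ∘ₗ (TensorProduct.assoc k A C A).symm.toLinearMap
    ∘ₗ lTensor A (lTensor C (g0 k A C ∘ₗ γ) ∘ₗ comul) ∘ₗ θ

noncomputable def auxAsm3 :
    (A ⊗[k] A) ⊗[k] ((C ⊗[k] A) ⊗[k] C) →ₗ[k] (A ⊗[k] C) ⊗[k] (A ⊗[k] C) :=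
  lTensor (A ⊗[k] C) (muls2 k A C)
    ∘ₗ (tensorTensorTensorComm k A A C (A ⊗[k] C)).toLinearMap
    ∘ₗ lTensor (A ⊗[k] A) (TensorProduct.assoc k C A C).toLinearMap

noncomputable def auxD1 : C →ₗ[k] (A ⊗[k] C) ⊗[k] (A ⊗[k] C) :=
  auxAsm3 ∘ₗ TensorProduct.map (kapAux k θ γ)
      (rTensor C (auxWcore θ γ) ∘ₗ comul) ∘ₗ (comul : C →ₗ[k] C ⊗[k] C)

lemma Wcore_eq (hθ : ComodCond k θ) :
    auxWcore θ γ = auxWc' θ γ ∘ₗ (comul : C →ₗ[k] C ⊗[k] C) := by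
  rw [ComodCond] at hθ
  rw [auxWcore, auxWc', lTensor_comp]
  simp only [comp_assoc]
  rw [hθ]

set_option maxHeartbeats 1000000 in
set_option synthInstance.maxHeartbeats 400000 in
lemma St4 : auxAsm3 ∘ₗ TensorProduct.map (kapAux k θ γ) (rTensor C (auxWc' θ γ))
    = auxAsm1 ∘ₗ TensorProduct.map (auxP1 θ γ)
        (TensorProduct.map θ (rTensor C (g0 k A C ∘ₗ γ))
          ∘ₗ (TensorProduct.assoc k C C C).toLinearMap) := by
  apply TensorProduct.ext'
  intro c₁ w
  induction w using TensorProduct.induction_on with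
  | zero => simp only [tmul_zero, map_zero]
  | add x y hx hy => simp only [tmul_add, map_add, hx, hy]
  | tmul y c₄ =>
    induction y using TensorProduct.induction_on with
    | zero => simp only [tmul_zero, zero_tmul, map_zero]
    | add x y hx hy => simp only [tmul_add, add_tmul, map_add, hx, hy]
    | tmul c₂ c₃ =>
      simp only [comp_apply, LinearEquiv.coe_coe, TensorProduct.assoc_tmul,
        TensorProduct.map_tmul, kapAux, auxP1, auxWc', rTensor_tmul, lamAux]
      generalize θ c₁ = w₁
      induction w₁ using TensorProduct.induction_on with
      | zero => simp only [zero_tmul, tmul_zero, map_zero]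
      | add x y hx hy => simp only [tmul_add, add_tmul, map_add, hx, hy]
      | tmul a z =>
        simp only [TensorProduct.map_tmul, comp_apply]
        generalize (Coalgebra.comul (R := k) a : A ⊗[k] A) = α
        generalize γ z = v
        generalize θ c₂ = u
        induction α using TensorProduct.induction_on with
        | zero => simp only [zero_tmul, tmul_zero, map_zero]
        | add x y hx hy => simp only [tmul_add, add_tmul, map_add, hx, hy]
        | tmul a₁ a₂ =>
          induction v using TensorProduct.induction_on with
          | zero => simp only [zero_tmul, tmul_zero, map_zero, mulPair, comp_apply,
              TensorProduct.map_tmul, tensorTensorTensorComm_tmul, LinearEquiv.coe_coe]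
          | add x y hx hy => simp only [tmul_add, add_tmul, map_add, hx, hy]
          | tmul v₁ v₂ =>
            induction u using TensorProduct.induction_on with
            | zero => simp only [zero_tmul, tmul_zero, map_zero, mulPair, auxAsm1, auxAsm3,
                auxK2, muls2, comp_apply, TensorProduct.map_tmul, lTensor_tmul,
                tensorTensorTensorComm_tmul, LinearEquiv.coe_coe]
            | add x y hx hy => simp only [tmul_add, add_tmul, map_add, hx, hy]
            | tmul u₁ u₂ =>
              simp only [mulPair, auxAsm1, auxAsm3, auxK2, muls2, g0, comp_apply,
                TensorProduct.map_tmul, lTensor_tmul, rTensor_tmul, LinearEquiv.coe_coe,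
                TensorProduct.assoc_tmul, TensorProduct.assoc_symm_tmul,
                TensorProduct.comm_tmul, tensorTensorTensorComm_tmul, mul'_apply,
                LinearMap.id_coe, id_eq, mul_assoc]

lemma S4 (hθ : ComodCond k θ) : auxD1 θ γ = auxG1 θ γ := by
  rw [auxD1, Wcore_eq θ γ hθ, rTensor_comp]
  simp only [comp_assoc]
  rw [show TensorProduct.map (kapAux k θ γ)
        (rTensor C (auxWc' θ γ) ∘ₗ rTensor C (comul : C →ₗ[k] C ⊗[k] C) ∘ₗ comul)
      = TensorProduct.map (kapAux k θ γ) (rTensor C (auxWc' θ γ))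
        ∘ₗ lTensor C (rTensor C (comul : C →ₗ[k] C ⊗[k] C) ∘ₗ comul) from by rw [map_comp_lTensor]]
  rw [auxG1, auxP2, auxT0]
  rw [show TensorProduct.map θ (rTensor C (g0 k A C ∘ₗ γ) ∘ₗ (comul : C →ₗ[k] C ⊗[k] C))
      = TensorProduct.map θ (rTensor C (g0 k A C ∘ₗ γ)) ∘ₗ lTensor C comul from by rw [map_comp_lTensor]]
  simp only [comp_assoc]
  rw [show TensorProduct.map (auxP1 θ γ)
        (TensorProduct.map θ (rTensor C (g0 k A C ∘ₗ γ))
          ∘ₗ (lTensor C (comul : C →ₗ[k] C ⊗[k] C) ∘ₗ comul))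
      = TensorProduct.map (auxP1 θ γ) (TensorProduct.map θ (rTensor C (g0 k A C ∘ₗ γ)))
        ∘ₗ lTensor C (lTensor C (comul : C →ₗ[k] C ⊗[k] C) ∘ₗ comul) from by
    rw [map_comp_lTensor]]
  have e3 : lTensor C (lTensor C (comul : C →ₗ[k] C ⊗[k] C) ∘ₗ comul)
      = lTensor C (TensorProduct.assoc k C C C).toLinearMap
        ∘ₗ lTensor C (rTensor C (comul : C →ₗ[k] C ⊗[k] C) ∘ₗ comul) := by
    rw [← Coalgebra.coassoc]
    simp only [comp_assoc, lTensor_comp]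
  have h := congrArg (fun f => f ∘ₗ (lTensor C (rTensor C (comul : C →ₗ[k] C ⊗[k] C)
      ∘ₗ (comul : C →ₗ[k] C ⊗[k] C)) ∘ₗ (comul : C →ₗ[k] C ⊗[k] C))) (St4 θ γ)
  rw [show TensorProduct.map (auxP1 θ γ)
        (TensorProduct.map θ (rTensor C (g0 k A C ∘ₗ γ))
          ∘ₗ (TensorProduct.assoc k C C C).toLinearMap)
      = TensorProduct.map (auxP1 θ γ) (TensorProduct.map θ (rTensor C (g0 k A C ∘ₗ γ)))
        ∘ₗ lTensor C (TensorProduct.assoc k C C C).toLinearMap from by rw [map_comp_lTensor]] at h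
  simp only [comp_assoc] at h ⊢
  rw [e3]
  simp only [comp_assoc]
  exact h

end St15

namespace St15
open TensorProduct LinearMap Coalgebra

variable {k A C : Type u} [Field k] [Ring A] [Bialgebra k A]
  [AddCommGroup C] [Module k C] [Coalgebra k C]
variable (θ γ : C →ₗ[k] A ⊗[k] C)

lemma core (hθ : ComodCond k θ) (hγ : ComodCond k γ)
    (h3b : muls2 k A C ∘ₗ lTensor A θ ∘ₗ γ = TensorProduct.mk k A C 1) :
    dAux k θ γ = auxD1 θ γ := by
  rw [S1 θ γ, ← crux3 θ γ hγ h3b]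
  have e : auxFF θ (auxNG θ γ) γ = auxFF θ (auxNG θ γ) (auxT0 γ) := by
    rw [auxT0, derA γ hγ]
  rw [e, S3 θ γ hθ, ← S4 θ γ hθ]

set_option maxHeartbeats 1600000 in
set_option synthInstance.maxHeartbeats 400000 in
lemma FACT : coDelta k (Wtw k θ γ LinearMap.id) (ρtw k θ γ)
    = TensorProduct.map (muls2 k A C) (muls2 k A C)
      ∘ₗ (tensorTensorTensorComm k A A (A ⊗[k] C) (A ⊗[k] C)).toLinearMap
      ∘ₗ TensorProduct.map (Coalgebra.comul (R := k) (A := A)) (auxD1 θ γ) := by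
  apply TensorProduct.ext'
  intro a c
  simp only [coDelta, ρtw, auxD1, comp_apply, lTensor_tmul, TensorProduct.map_tmul,
    LinearEquiv.coe_coe]
  generalize (Coalgebra.comul (R := k) c : C ⊗[k] C) = P
  induction P using TensorProduct.induction_on with
  | zero => simp only [tmul_zero, map_zero]
  | add x y hx hy => simp only [tmul_add, map_add, hx, hy]
  | tmul c₁ c₂ =>
    simp only [LinearEquiv.coe_coe, TensorProduct.assoc_symm_tmul, TensorProduct.map_tmul,
      comp_apply]
    generalize (Coalgebra.comul (R := k) a : A ⊗[k] A) = α
    generalize kapAux k θ γ c₁ = K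
    generalize (Coalgebra.comul (R := k) c₂ : C ⊗[k] C) = V
    induction α using TensorProduct.induction_on with
    | zero => simp only [zero_tmul, tmul_zero, map_zero]
    | add x y hx hy => simp only [tmul_add, add_tmul, map_add, hx, hy]
    | tmul a₁ a₂ =>
      induction K using TensorProduct.induction_on with
      | zero => simp only [zero_tmul, tmul_zero, map_zero, mulPair, comp_apply,
          TensorProduct.map_tmul, tensorTensorTensorComm_tmul, LinearEquiv.coe_coe]
      | add x y hx hy => simp only [tmul_add, add_tmul, map_add, hx, hy]
      | tmul K₁ K₂ =>
        induction V using TensorProduct.induction_on with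
        | zero => simp only [zero_tmul, tmul_zero, map_zero, mulPair, comp_apply,
            TensorProduct.map_tmul, tensorTensorTensorComm_tmul, LinearEquiv.coe_coe]
        | add x y hx hy => simp only [tmul_add, add_tmul, map_add, hx, hy]
        | tmul v w =>
          simp only [mulPair, comp_apply, TensorProduct.map_tmul,
            tensorTensorTensorComm_tmul, LinearEquiv.coe_coe, mul'_apply,
            TensorProduct.assoc_tmul, TensorProduct.assoc_symm_tmul, lTensor_tmul,
            rTensor_tmul, Wtw, auxWcore, auxAsm3, muls2]
          generalize θ v = u
          induction u using TensorProduct.induction_on with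
          | zero => simp only [zero_tmul, tmul_zero, map_zero]
          | add x y hx hy => simp only [tmul_add, add_tmul, map_add, hx, hy]
          | tmul β m =>
            simp only [lTensor_tmul, TensorProduct.map_tmul, comp_apply]
            generalize (Coalgebra.comul (R := k) m : C ⊗[k] C) = M
            induction M using TensorProduct.induction_on with
            | zero => simp only [zero_tmul, tmul_zero, map_zero]
            | add x y hx hy => simp only [tmul_add, add_tmul, map_add, hx, hy]
            | tmul m₁ m₂ =>
              simp only [TensorProduct.map_tmul, LinearEquiv.coe_coe, lTensor_tmul,
            rTensor_tmul, comp_apply, TensorProduct.assoc_tmul,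
            TensorProduct.assoc_symm_tmul, TensorProduct.comm_tmul,
            tensorTensorTensorComm_tmul, mul'_apply, muls2, g0, id_coe, id_eq,
            mul_assoc]

end St15

namespace St15
open TensorProduct LinearMap Coalgebra

variable {k A C : Type u} [Field k] [Ring A] [Bialgebra k A]
  [AddCommGroup C] [Module k C] [Coalgebra k C]
variable (θ γ : C →ₗ[k] A ⊗[k] C)

lemma B0 : (Coalgebra.comul (R := k) (A := A)) ∘ₗ mul' k A
    = mulPair k ∘ₗ TensorProduct.map (Coalgebra.comul (R := k) (A := A))
        (Coalgebra.comul (R := k) (A := A)) := by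
  apply TensorProduct.ext'
  intro a b
  simp only [comp_apply, mul'_apply, TensorProduct.map_tmul, Bialgebra.comul_mul, mulPair]
  generalize (Coalgebra.comul (R := k) a : A ⊗[k] A) = α
  generalize (Coalgebra.comul (R := k) b : A ⊗[k] A) = β
  induction α using TensorProduct.induction_on with
  | zero => simp only [zero_mul, zero_tmul, map_zero]
  | add x y hx hy => simp only [add_mul, add_tmul, map_add, hx, hy]
  | tmul a₁ a₂ =>
    induction β using TensorProduct.induction_on with
    | zero => simp only [mul_zero, tmul_zero, map_zero]
    | add x y hx hy => simp only [mul_add, tmul_add, map_add, hx, hy]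
    | tmul b₁ b₂ =>
      simp only [comp_apply, TensorProduct.map_tmul, tensorTensorTensorComm_tmul,
        LinearEquiv.coe_coe, mul'_apply, Algebra.TensorProduct.tmul_mul_tmul]

lemma nat1 : lTensor (A ⊗[k] A) (comul : C →ₗ[k] C ⊗[k] C)
      ∘ₗ (TensorProduct.assoc k A A C).symm.toLinearMap
    = (TensorProduct.assoc k A A (C ⊗[k] C)).symm.toLinearMap
      ∘ₗ lTensor A (lTensor A (comul : C →ₗ[k] C ⊗[k] C)) := by
  ext a b c
  simp

set_option maxHeartbeats 1600000 in
set_option synthInstance.maxHeartbeats 400000 in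
lemma St5 : TensorProduct.map (muls2 k A C) (muls2 k A C)
      ∘ₗ (tensorTensorTensorComm k A A (A ⊗[k] C) (A ⊗[k] C)).toLinearMap
      ∘ₗ TensorProduct.map (Coalgebra.comul (R := k) (A := A))
          (lTensor (A ⊗[k] C) (muls2 k A C)
            ∘ₗ (TensorProduct.assoc k (A ⊗[k] C) A (A ⊗[k] C)).toLinearMap
            ∘ₗ TensorProduct.map (eAux k θ γ) γ)
    = TensorProduct.map (φtw k γ) (φtw k γ)
      ∘ₗ (tensorTensorTensorComm k A A C C).toLinearMap
      ∘ₗ rTensor (C ⊗[k] C) (mulPair k)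
      ∘ₗ rTensor (C ⊗[k] C) (TensorProduct.map (Coalgebra.comul (R := k) (A := A))
          (Coalgebra.comul (R := k) (A := A)))
      ∘ₗ (TensorProduct.assoc k A A (C ⊗[k] C)).symm.toLinearMap
      ∘ₗ lTensor A ((TensorProduct.assoc k A C C).toLinearMap ∘ₗ rTensor C θ) := by
  apply TensorProduct.ext'
  intro a w
  induction w using TensorProduct.induction_on with
  | zero => simp only [tmul_zero, map_zero]
  | add x y hx hy => simp only [tmul_add, map_add, hx, hy]
  | tmul c₁ c₂ =>
    simp only [comp_apply, TensorProduct.map_tmul, lTensor_tmul, rTensor_tmul,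
      LinearEquiv.coe_coe, eAux]
    generalize θ c₁ = t
    induction t using TensorProduct.induction_on with
    | zero => simp only [zero_tmul, tmul_zero, map_zero]
    | add x y hx hy => simp only [tmul_add, add_tmul, map_add, hx, hy]
    | tmul at' zt =>
      simp only [TensorProduct.assoc_tmul, TensorProduct.assoc_symm_tmul, lTensor_tmul,
        rTensor_tmul, comp_apply, TensorProduct.map_tmul]
      generalize (Coalgebra.comul (R := k) a : A ⊗[k] A) = α
      generalize (Coalgebra.comul (R := k) at' : A ⊗[k] A) = αt
      induction α using TensorProduct.induction_on with
      | zero => simp only [zero_tmul, tmul_zero, map_zero]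
      | add x y hx hy => simp only [tmul_add, add_tmul, map_add, hx, hy]
      | tmul a₁ a₂ =>
        induction αt using TensorProduct.induction_on with
        | zero => simp only [zero_tmul, tmul_zero, map_zero, mulPair, comp_apply,
            TensorProduct.map_tmul, tensorTensorTensorComm_tmul, LinearEquiv.coe_coe]
        | add x y hx hy => simp only [tmul_add, add_tmul, map_add, hx, hy]
        | tmul b₁ b₂ =>
          simp only [mulPair, φtw, muls2, comp_apply, TensorProduct.map_tmul,
            lTensor_tmul, rTensor_tmul, tensorTensorTensorComm_tmul, LinearEquiv.coe_coe,
            mul'_apply, TensorProduct.assoc_tmul, TensorProduct.assoc_symm_tmul]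
          generalize γ zt = vt
          generalize γ c₂ = vc
          induction vt using TensorProduct.induction_on with
          | zero => simp only [zero_tmul, tmul_zero, map_zero]
          | add x y hx hy => simp only [tmul_add, add_tmul, map_add, hx, hy]
          | tmul v₁ v₂ =>
            induction vc using TensorProduct.induction_on with
            | zero => simp only [zero_tmul, tmul_zero, map_zero]
            | add x y hx hy => simp only [tmul_add, add_tmul, map_add, hx, hy]
            | tmul w₁ w₂ =>
              simp [mul_assoc, mul'_apply]

end St15

namespace St15
open TensorProduct LinearMap Coalgebra

variable {k A C : Type u} [Field k] [Ring A] [Bialgebra k A]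
  [AddCommGroup C] [Module k C] [Coalgebra k C]
variable (θ γ : C →ₗ[k] A ⊗[k] C)

lemma L1 (hθ : ComodCond k θ) :
    deltaExplicit k θ γ
      = TensorProduct.map (φtw k γ) (φtw k γ)
          ∘ₗ Coalgebra.comul (R := k) (A := A ⊗[k] C) ∘ₗ φtw k θ := by
  have hcom : (Coalgebra.comul (R := k) (A := A ⊗[k] C))
      = (tensorTensorTensorComm k A A C C).toLinearMap
        ∘ₗ TensorProduct.map (Coalgebra.comul (R := k) (A := A))
            (Coalgebra.comul (R := k) (A := C)) := rfl
  have h1 : TensorProduct.map (Coalgebra.comul (R := k) (A := A))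
        (Coalgebra.comul (R := k) (A := C)) ∘ₗ muls2 k A C
      = TensorProduct.map (mulPair k) (Coalgebra.comul (R := k) (A := C))
        ∘ₗ rTensor C (TensorProduct.map (Coalgebra.comul (R := k) (A := A))
            (Coalgebra.comul (R := k) (A := A)))
        ∘ₗ (TensorProduct.assoc k A A C).symm.toLinearMap := by
    rw [muls2, ← comp_assoc, map_comp_rTensor, B0, ← map_comp_rTensor, comp_assoc]
  have h2 : TensorProduct.map (mulPair k) (Coalgebra.comul (R := k) (A := C))
      = rTensor (C ⊗[k] C) (mulPair k)
        ∘ₗ lTensor ((A ⊗[k] A) ⊗[k] (A ⊗[k] A)) (Coalgebra.comul (R := k) (A := C)) := by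
    rw [rTensor_comp_lTensor]
  have h3 : lTensor ((A ⊗[k] A) ⊗[k] (A ⊗[k] A)) (Coalgebra.comul (R := k) (A := C))
        ∘ₗ rTensor C (TensorProduct.map (Coalgebra.comul (R := k) (A := A))
            (Coalgebra.comul (R := k) (A := A)))
      = rTensor (C ⊗[k] C) (TensorProduct.map (Coalgebra.comul (R := k) (A := A))
            (Coalgebra.comul (R := k) (A := A)))
        ∘ₗ lTensor (A ⊗[k] A) (Coalgebra.comul (R := k) (A := C)) := by
    rw [lTensor_comp_rTensor, rTensor_comp_lTensor]
  have h5 : lTensor A (lTensor A (Coalgebra.comul (R := k) (A := C))) ∘ₗ lTensor A θ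
      = lTensor A ((TensorProduct.assoc k A C C).toLinearMap ∘ₗ rTensor C θ)
        ∘ₗ lTensor A (comul : C →ₗ[k] C ⊗[k] C) := by
    rw [← lTensor_comp, ← lTensor_comp]
    rw [ComodCond] at hθ
    rw [hθ]
    simp only [comp_assoc]
  have h1' := congrArg (fun f => f ∘ₗ lTensor A θ) h1
  simp only [comp_assoc] at h1'
  rw [h2] at h1'
  simp only [comp_assoc] at h1'
  have h3' := congrArg (fun f => f ∘ₗ ((TensorProduct.assoc k A A C).symm.toLinearMap
      ∘ₗ lTensor A θ)) h3
  simp only [comp_assoc] at h3'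
  rw [h3'] at h1'
  have h4' := congrArg (fun f => f ∘ₗ lTensor A θ) (nat1 (k := k) (A := A) (C := C))
  simp only [comp_assoc] at h4'
  rw [h4', h5] at h1'
  rw [hcom, deltaExplicit, dAux]
  rw [show TensorProduct.map (Coalgebra.comul (R := k) (A := A))
        (lTensor (A ⊗[k] C) (muls2 k A C)
          ∘ₗ (TensorProduct.assoc k (A ⊗[k] C) A (A ⊗[k] C)).toLinearMap
          ∘ₗ TensorProduct.map (eAux k θ γ) γ ∘ₗ (comul : C →ₗ[k] C ⊗[k] C))
      = TensorProduct.map (Coalgebra.comul (R := k) (A := A))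
          (lTensor (A ⊗[k] C) (muls2 k A C)
            ∘ₗ (TensorProduct.assoc k (A ⊗[k] C) A (A ⊗[k] C)).toLinearMap
            ∘ₗ TensorProduct.map (eAux k θ γ) γ)
        ∘ₗ lTensor A (comul : C →ₗ[k] C ⊗[k] C) from by
    rw [map_comp_lTensor]
    simp only [comp_assoc]]
  rw [show φtw k θ = muls2 k A C ∘ₗ lTensor A θ from rfl]
  simp only [comp_assoc]
  rw [h1']
  have h := congrArg (fun f => f ∘ₗ lTensor A (comul : C →ₗ[k] C ⊗[k] C)) (St5 θ γ)
  simp only [comp_assoc] at h ⊢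
  exact h

end St15

/-- the comultiplication of the crossed coproduct `A_{W',ρ'} ⊗ C` is given
by the explicit formula (deltaprim), and equals `(φ⁻¹ ⊗ φ⁻¹) ∘ Δ ∘ φ` for
`φ(a ⊗ c) = a c_{<-1>} ⊗ c_{<0>}`, `φ⁻¹(a ⊗ c) = a c_{{-1}} ⊗ c_{{0}}`. -/
theorem statement15 {k A C : Type u} [Field k] [Ring A] [Bialgebra k A]
    [AddCommGroup C] [Module k C] [Coalgebra k C] (eC : C)
    (R : C ⊗[k] A →ₗ[k] A ⊗[k] C) (σ : C ⊗[k] C →ₗ[k] A ⊗[k] C)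
    (hcross : IsCrossBialgebra0 k eC R σ)
    (θ γ : C →ₗ[k] A ⊗[k] C)
    (htw : TwistConditions k eC R σ θ γ) :
    coDelta k (Wtw k θ γ LinearMap.id) (ρtw k θ γ) = deltaExplicit k θ γ ∧
    coDelta k (Wtw k θ γ LinearMap.id) (ρtw k θ γ)
      = TensorProduct.map (φtw k γ) (φtw k γ)
          ∘ₗ Coalgebra.comul (R := k) (A := A ⊗[k] C) ∘ₗ φtw k θ := by
  obtain ⟨⟨hθe, hγe, h3a, h3b⟩, hc4, hce1, hce2, hcomθ, hcomγ⟩ := htw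
  have h1 : coDelta k (Wtw k θ γ LinearMap.id) (ρtw k θ γ) = deltaExplicit k θ γ := by
    rw [St15.FACT θ γ, deltaExplicit, St15.core θ γ hcomθ hcomγ h3b]
  exact ⟨h1, h1.trans (St15.L1 θ γ hcomθ)⟩
end
end
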